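/- arXiv:math/9810090 — 7 statements merged into one kernel-verified Lean document; each statement's English description precedes it below -/
import Mathlib

section
/- Let 0 < r* < 1, let j ≥ 2 be an integer, and let L(z) = z^j map the open disk Δ(0,r*) into itself. Suppose Δ(0,r*) = A ∪ B where A is open, A and B are disjoint and nonempty, and both A and B are completely invariant under L (i.e., L(A) ⊂ A, L⁻¹(A) ∩ Δ(0,r*) ⊂ A, and similarly for B). Then for every point re^{iθ} ∈ A, the entire circle {z : |z| = r} is contained in A. -/
open Metric Set

/-- If `Δ(0,r*) = A ∪ B` with `A` open, `A, B` disjoint nonempty and both completely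
invariant under `L z = z ^ j` (`j ≥ 2`), then `A` is a union of circles centered at `0`:
together with any point it contains the whole circle through that point. -/
theorem stmt0 (rs : ℝ) (hrs0 : 0 < rs) (hrs1 : rs < 1) (j : ℕ) (hj : 2 ≤ j)
    (A B : Set ℂ) (hAopen : IsOpen A) (hdisj : Disjoint A B)
    (hAne : A.Nonempty) (hBne : B.Nonempty)
    (hunion : Metric.ball (0 : ℂ) rs = A ∪ B)
    (hAfwd : (fun z : ℂ => z ^ j) '' A ⊆ A)
    (hAbwd : (fun z : ℂ => z ^ j) ⁻¹' A ∩ Metric.ball (0 : ℂ) rs ⊆ A)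
    (hBfwd : (fun z : ℂ => z ^ j) '' B ⊆ B)
    (hBbwd : (fun z : ℂ => z ^ j) ⁻¹' B ∩ Metric.ball (0 : ℂ) rs ⊆ B) :
    ∀ z ∈ A, ∀ w : ℂ, ‖w‖ = ‖z‖ → w ∈ A := by
  intro z hz w hww
  have hball : A ⊆ Metric.ball (0 : ℂ) rs := by rw [hunion]; exact subset_union_left
  by_cases hz0 : z = 0
  · rw [hz0, norm_zero, norm_eq_zero] at hww
    rwa [hww, ← hz0]
  have hj0 : (0 : ℝ) < (j : ℝ) := by positivity
  have hjne : (j : ℂ) ≠ 0 := Nat.cast_ne_zero.mpr (by omega)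
  have hzr : ‖z‖ < rs := mem_ball_zero_iff.mp (hball hz)
  have hz1 : ‖z‖ < 1 := hzr.trans hrs1
  have hr0 : 0 < ‖z‖ := by
    simpa [norm_pos_iff] using hz0
  -- an open arc around z is contained in A
  obtain ⟨δ, hδ0, hδ⟩ : ∃ δ > 0, ∀ φ : ℝ, |φ| < δ →
      z * Complex.exp (φ * Complex.I) ∈ A := by
    have hc : Continuous fun φ : ℝ => z * Complex.exp ((φ : ℂ) * Complex.I) := by
      fun_prop
    have hopen := hAopen.preimage hc
    have h0 : (0 : ℝ) ∈ (fun φ : ℝ => z * Complex.exp ((φ : ℂ) * Complex.I)) ⁻¹' A := by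
      simp [hz]
    obtain ⟨δ, hδ0, hsub⟩ := Metric.isOpen_iff.mp hopen 0 h0
    exact ⟨δ, hδ0, fun φ hφ => hsub (by simpa [Real.dist_eq] using hφ)⟩
  -- spread the arc forward with iteration
  have spread : ∀ n : ℕ, ∀ φ : ℝ, |φ| < (j : ℝ) ^ n * δ →
      z ^ j ^ n * Complex.exp ((φ : ℂ) * Complex.I) ∈ A := by
    intro n
    induction n with
    | zero => intro φ hφ; simpa using hδ φ (by simpa using hφ)
    | succ n ih =>
      intro φ hφ
      have h1 : |φ / (j : ℝ)| < (j : ℝ) ^ n * δ := by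
        rw [abs_div, abs_of_pos hj0, div_lt_iff₀ hj0]
        calc |φ| < (j : ℝ) ^ (n + 1) * δ := hφ
          _ = (j : ℝ) ^ n * δ * (j : ℝ) := by ring
      have hmem : (z ^ j ^ n * Complex.exp ((↑(φ / (j : ℝ)) : ℂ) * Complex.I)) ^ j ∈ A :=
        hAfwd ⟨_, ih (φ / (j : ℝ)) h1, rfl⟩
      have heq : (z ^ j ^ n * Complex.exp ((↑(φ / (j : ℝ)) : ℂ) * Complex.I)) ^ j
          = z ^ j ^ (n + 1) * Complex.exp ((φ : ℂ) * Complex.I) := by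
        rw [mul_pow, ← pow_mul, ← pow_succ, ← Complex.exp_nat_mul]
        congr 1
        push_cast
        field_simp
      rwa [heq] at hmem
  -- choose n so that the arc covers the whole circle
  obtain ⟨n, hn⟩ : ∃ n : ℕ, Real.pi / δ < (j : ℝ) ^ n := by
    have hj1 : (1 : ℝ) < (j : ℝ) := by exact_mod_cast lt_of_lt_of_le one_lt_two hj
    exact pow_unbounded_of_one_lt _ hj1
  have hπ : Real.pi < (j : ℝ) ^ n * δ := by
    rwa [div_lt_iff₀ hδ0] at hn
  -- whole circle of radius |z|^(j^n) is in A
  have circle : ∀ w' : ℂ, ‖w'‖ = ‖z‖ ^ j ^ n → w' ∈ A := by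
    intro w' hw'
    have hzn : z ^ j ^ n ≠ 0 := pow_ne_zero _ hz0
    set ψ := (w' / z ^ j ^ n).arg with hψ
    have habs1 : ‖w' / z ^ j ^ n‖ = 1 := by
      rw [norm_div, norm_pow, hw']
      exact div_self (by positivity)
    have hw'eq : w' = z ^ j ^ n * Complex.exp ((ψ : ℂ) * Complex.I) := by
      have h := Complex.norm_mul_exp_arg_mul_I (w' / z ^ j ^ n)
      rw [habs1] at h
      have h2 : Complex.exp ((ψ : ℂ) * Complex.I) = w' / z ^ j ^ n := by
        simpa using h
      rw [h2]
      field_simp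
    rw [hw'eq]
    exact spread n ψ (lt_of_le_of_lt (Complex.abs_arg_le_pi _) hπ)
  -- pull back n times
  have desc : ∀ m : ℕ,
      (∀ w' : ℂ, ‖w'‖ = ‖z‖ ^ j ^ (m + 1) → w' ∈ A) →
      (∀ w' : ℂ, ‖w'‖ = ‖z‖ ^ j ^ m → w' ∈ A) := by
    intro m h w' hw'
    have hle : ‖w'‖ < rs := by
      rw [hw']
      calc ‖z‖ ^ j ^ m ≤ ‖z‖ ^ 1 :=
            pow_le_pow_of_le_one hr0.le hz1.le (Nat.one_le_pow _ _ (by omega))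
        _ = ‖z‖ := pow_one _
        _ < rs := hzr
    refine hAbwd ⟨h _ ?_, mem_ball_zero_iff.mpr hle⟩
    rw [norm_pow, hw', ← pow_mul, ← pow_succ]
  have down : ∀ m : ℕ,
      (∀ w' : ℂ, ‖w'‖ = ‖z‖ ^ j ^ m → w' ∈ A) →
      (∀ w' : ℂ, ‖w'‖ = ‖z‖ ^ j ^ 0 → w' ∈ A) := by
    intro m
    induction m with
    | zero => exact fun h => h
    | succ m ih => exact fun h => ih (desc m h)
  exact down n circle w (by simpa using hww)
end

section
/- Let L : Δ(0,r*) → Δ(0,r*) be analytic with L(0) = 0, where 0 < r* < 1, and assume L is not identically zero. Let B ⊂ Δ(0,r*) be a set with empty interior which is a union of circles centered at the origin faithfully containing a sequence of such circles with radii tending to 0 (each radius positive). If L(B) ⊂ B, then L(z) = a z^j for some nonzero complex number a and some positive integer j. -/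
open Metric Set Filter

/-- If `L` is analytic on `Δ(0,r*)`, maps it into itself, fixes `0`, is not identically
zero, and leaves forward invariant a set `B` with empty interior which is a union of circles
centered at the origin containing a sequence of circles with radii tending to `0`, then
`L z = a * z ^ j` on the disk for some `a ≠ 0` and `j ≥ 1`. -/
theorem stmt2 (rs : ℝ) (hrs0 : 0 < rs) (hrs1 : rs < 1) (L : ℂ → ℂ)
    (hLan : AnalyticOnNhd ℂ L (Metric.ball (0 : ℂ) rs))
    (hLmaps : Set.MapsTo L (Metric.ball (0 : ℂ) rs) (Metric.ball (0 : ℂ) rs))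
    (hL0 : L 0 = 0)
    (hLnz : ∃ z ∈ Metric.ball (0 : ℂ) rs, L z ≠ 0)
    (B : Set ℂ) (hBsub : B ⊆ Metric.ball (0 : ℂ) rs)
    (hBint : interior B = ∅)
    (hBcirc : ∀ z ∈ B, ∀ w : ℂ, ‖w‖ = ‖z‖ → w ∈ B)
    (rseq : ℕ → ℝ) (hrpos : ∀ n, 0 < rseq n)
    (hrtend : Tendsto rseq atTop (nhds 0))
    (hrB : ∀ n, {z : ℂ | ‖z‖ = rseq n} ⊆ B)
    (hfwd : L '' B ⊆ B) :
    ∃ a : ℂ, a ≠ 0 ∧ ∃ j : ℕ, 0 < j ∧ ∀ z ∈ Metric.ball (0 : ℂ) rs, L z = a * z ^ j := by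
  -- Step 1: |L| is constant on each circle of radius `rseq n`.
  have key : ∀ n : ℕ, ∀ z w : ℂ, ‖z‖ = rseq n → ‖w‖ = rseq n →
      ‖L z‖ = ‖L w‖ := by
    intro n z w hz hw
    set r := rseq n with hr_def
    have hr : 0 < r := hrpos n
    have hsphB : Metric.sphere (0 : ℂ) r ⊆ B := by
      intro u hu
      exact hrB n (by simpa using mem_sphere_zero_iff_norm.mp hu)
    have hsph_ball : Metric.sphere (0 : ℂ) r ⊆ Metric.ball (0 : ℂ) rs :=
      fun u hu => hBsub (hsphB hu)
    have hsph_conn : IsConnected (Metric.sphere (0 : ℂ) r) := by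
      apply isConnected_sphere ?_ 0 hr.le
      rw [Complex.rank_real_complex]
      norm_num
    -- T = image of moduli of L on the sphere: connected subset of moduli of B
    set T : Set ℝ := (fun u => ‖L u‖) '' Metric.sphere (0 : ℂ) r with hT_def
    have hT_conn : IsPreconnected T := by
      apply hsph_conn.isPreconnected.image
      exact continuous_norm.comp_continuousOn (hLan.continuousOn.mono hsph_ball)
    -- any two points of T coincide
    have main : ∀ c d : ℝ, c ∈ T → d ∈ T → c < d → False := by
      intro c d hc hd hcd
      have hc0 : 0 ≤ c := by
        obtain ⟨u, -, hu⟩ := hc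
        exact hu ▸ norm_nonneg _
      set Ann : Set ℂ := (norm : ℂ → ℝ) ⁻¹' Ioo c d with hAnn_def
      have hAnn_open : IsOpen Ann := isOpen_Ioo.preimage continuous_norm
      have hAnnB : Ann ⊆ B := by
        intro u hu
        have h1 : ‖u‖ ∈ T :=
          hT_conn.ordConnected.out hc hd ⟨(hu.1).le, (hu.2).le⟩
        obtain ⟨v, hv, hvu⟩ := h1
        have hvB : L v ∈ B := hfwd ⟨v, hsphB hv, rfl⟩
        exact hBcirc (L v) hvB u hvu.symm
      have hne : (((c + d) / 2 : ℝ) : ℂ) ∈ Ann := by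
        rw [hAnn_def, mem_preimage, Complex.norm_real, Real.norm_of_nonneg (by linarith)]
        constructor <;> [linarith; linarith]
      have : (((c + d) / 2 : ℝ) : ℂ) ∈ interior B :=
        interior_maximal hAnnB hAnn_open hne
      rw [hBint] at this
      exact this
    by_contra hne
    rcases lt_or_gt_of_ne hne with h | h
    · exact main _ _ ⟨z, by simpa using hz, rfl⟩
        ⟨w, by simpa using hw, rfl⟩ h
    · exact main _ _ ⟨w, by simpa using hw, rfl⟩
        ⟨z, by simpa using hz, rfl⟩ h
  -- Step 2: factor L at its vanishing order at 0
  have h0mem : (0 : ℂ) ∈ Metric.ball (0 : ℂ) rs := by simpa using hrs0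
  have hL0an : AnalyticAt ℂ L 0 := hLan 0 h0mem
  have hball_conn : IsPreconnected (Metric.ball (0 : ℂ) rs) :=
    (convex_ball _ _).isPreconnected
  have horder_ne_top : analyticOrderAt L 0 ≠ ⊤ := by
    rw [Ne, analyticOrderAt_eq_top]
    intro h
    obtain ⟨z, hzball, hzne⟩ := hLnz
    exact hzne (hLan.eqOn_zero_of_preconnected_of_eventuallyEq_zero hball_conn h0mem h hzball)
  obtain ⟨j, hj⟩ : ∃ j : ℕ, analyticOrderAt L 0 = (j : ℕ∞) :=
    ⟨(analyticOrderAt L 0).toNat, (ENat.coe_toNat horder_ne_top).symm⟩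
  obtain ⟨g, hg_an, hg0, hg_eq⟩ := (hL0an.analyticOrderAt_eq_natCast (n := j)).mp hj
  -- get a ball where everything is nice
  have hgan' : ∀ᶠ u in nhds (0 : ℂ), AnalyticAt ℂ g u := hg_an.eventually_analyticAt
  have hgne : ∀ᶠ u in nhds (0 : ℂ), g u ≠ 0 :=
    hg_an.continuousAt.eventually_ne hg0
  obtain ⟨δ, hδ0, hδ⟩ := Metric.eventually_nhds_iff_ball.mp ((hg_eq.and hgan').and hgne)
  obtain ⟨n, hn⟩ := (hrtend.eventually (gt_mem_nhds hδ0)).exists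
  set r := rseq n with hr_def
  have hr0 : 0 < r := hrpos n
  have hrδ : r < δ := hn
  have hballsub : Metric.ball (0 : ℂ) r ⊆ Metric.ball (0 : ℂ) δ := ball_subset_ball hrδ.le
  have hcballsub : Metric.closedBall (0 : ℂ) r ⊆ Metric.ball (0 : ℂ) δ :=
    closedBall_subset_ball hrδ
  -- |g| constant on the sphere of radius r
  set c : ℝ := ‖L (r : ℂ)‖ with hc_def
  have hrabs : ‖((r : ℝ) : ℂ)‖ = r := by
    rw [Complex.norm_real, Real.norm_of_nonneg hr0.le]
  have hLconst : ∀ u : ℂ, ‖u‖ = r → ‖L u‖ = c :=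
    fun u hu => key n u (r : ℂ) hu hrabs
  set d : ℝ := c / r ^ j with hd_def
  have hgsph : ∀ u : ℂ, ‖u‖ = r → ‖g u‖ = d := by
    intro u hu
    have humem : u ∈ Metric.ball (0 : ℂ) δ := by
      rw [mem_ball_zero_iff, hu]; exact hrδ
    have hLu : L u = u ^ j * g u := by
      have := (hδ u humem).1.1
      simpa [smul_eq_mul] using this
    have : c = r ^ j * ‖g u‖ := by
      rw [← hLconst u hu, hLu, norm_mul, norm_pow, hu]
    rw [hd_def, this]
    field_simp
  have hd_pos : 0 < d := by
    have humem : ((r : ℝ) : ℂ) ∈ Metric.ball (0 : ℂ) δ := by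
      rw [mem_ball_zero_iff, hrabs]; exact hrδ
    have hgr : g ((r : ℝ) : ℂ) ≠ 0 := (hδ _ humem).2
    have := hgsph ((r : ℝ) : ℂ) hrabs
    rw [← this]
    exact norm_pos_iff.mpr hgr
  -- g is differentiable on ball δ and nonvanishing there
  have hgdiff : DifferentiableOn ℂ g (Metric.ball (0 : ℂ) δ) :=
    fun u hu => ((hδ u hu).1.2).differentiableAt.differentiableWithinAt
  have hgne' : ∀ u ∈ Metric.ball (0 : ℂ) δ, g u ≠ 0 := fun u hu => (hδ u hu).2
  have hfrontier : frontier (Metric.ball (0 : ℂ) r) = Metric.sphere (0 : ℂ) r :=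
    frontier_ball 0 hr0.ne'
  have hclosure : closure (Metric.ball (0 : ℂ) r) = Metric.closedBall (0 : ℂ) r :=
    closure_ball 0 hr0.ne'
  have hsph_eq : ∀ u : ℂ, u ∈ Metric.sphere (0 : ℂ) r → ‖g u‖ = d := by
    intro u hu
    exact hgsph u (by simpa using mem_sphere_zero_iff_norm.mp hu)
  -- max modulus: ‖g‖ ≤ d on closedBall r
  have hgd1 : ∀ u ∈ Metric.closedBall (0 : ℂ) r, ‖g u‖ ≤ d := by
    intro u hu
    apply Complex.norm_le_of_forall_mem_frontier_norm_le isBounded_ball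
      ((hgdiff.mono (hclosure ▸ hcballsub)).diffContOnCl)
    · intro w hw
      rw [hfrontier] at hw
      rw [hsph_eq w hw]
    · rw [hclosure]; exact hu
  -- min modulus via 1/g
  have hgd2 : ∀ u ∈ Metric.closedBall (0 : ℂ) r, d ≤ ‖g u‖ := by
    have hinvdiff : DifferentiableOn ℂ (fun u => (g u)⁻¹) (Metric.ball (0 : ℂ) δ) :=
      hgdiff.inv hgne'
    intro u hu
    have hb : ‖(g u)⁻¹‖ ≤ d⁻¹ := by
      apply Complex.norm_le_of_forall_mem_frontier_norm_le isBounded_ball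
        ((hinvdiff.mono (hclosure ▸ hcballsub)).diffContOnCl)
      · intro w hw
        rw [hfrontier] at hw
        rw [norm_inv, hsph_eq w hw]
      · rw [hclosure]; exact hu
    have hgu : g u ≠ 0 := hgne' u (hcballsub hu)
    rw [norm_inv] at hb
    have hgupos : 0 < ‖g u‖ := norm_pos_iff.mpr hgu
    rw [inv_le_inv₀ hgupos hd_pos] at hb
    exact hb
  have hgconst_norm : ∀ u ∈ Metric.closedBall (0 : ℂ) r, ‖g u‖ = d :=
    fun u hu => le_antisymm (hgd1 u hu) (hgd2 u hu)
  -- hence g is constant on ball r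
  have h0ball : (0 : ℂ) ∈ Metric.ball (0 : ℂ) r := mem_ball_self hr0
  have hmax : IsMaxOn (norm ∘ g) (Metric.ball (0 : ℂ) r) 0 := by
    intro u hu
    simp only [Function.comp_apply, Set.mem_setOf_eq]
    rw [hgconst_norm u (ball_subset_closedBall hu),
      hgconst_norm 0 (ball_subset_closedBall h0ball)]
  have hgconst : Set.EqOn g (Function.const ℂ (g 0)) (Metric.ball (0 : ℂ) r) :=
    Complex.eqOn_of_isPreconnected_of_isMaxOn_norm (convex_ball _ _).isPreconnected
      isOpen_ball (hgdiff.mono hballsub) h0ball hmax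
  -- eventual equality L z = g 0 * z ^ j near 0
  have hev : L =ᶠ[nhds (0 : ℂ)] fun u => g 0 * u ^ j := by
    filter_upwards [Metric.ball_mem_nhds (0 : ℂ) hr0] with u hu
    have hLu : L u = u ^ j * g u := by
      have := (hδ u (hballsub hu)).1.1
      simpa [smul_eq_mul] using this
    rw [hLu, hgconst hu]
    simp only [Function.const_apply]
    ring
  -- identity theorem on the ball of radius rs
  have hpoly : AnalyticOnNhd ℂ (fun u : ℂ => g 0 * u ^ j) (Metric.ball (0 : ℂ) rs) :=
    fun u _ => (analyticAt_const).mul ((analyticAt_id).pow j)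
  have hfinal : Set.EqOn L (fun u : ℂ => g 0 * u ^ j) (Metric.ball (0 : ℂ) rs) :=
    hLan.eqOn_of_preconnected_of_eventuallyEq hpoly hball_conn h0mem hev
  -- j is positive
  have hjpos : 0 < j := by
    rcases Nat.eq_zero_or_pos j with hj0 | hj0
    · exfalso
      have := hfinal h0mem
      rw [hL0, hj0] at this
      simp at this
      exact hg0 this.symm
    · exact hj0
  exact ⟨g 0, hg0, j, hjpos, fun z hz => hfinal hz⟩
end

section
/- Let L : Δ(0,r*) → ℂ be analytic (0 < r* < 1) with L not identically zero and L(0) = 0, so that L(z) = a z^j (1 + higher order terms) with a ≠ 0. Suppose there is a sequence of radii r_n → 0, r_n > 0, such that each image L(C(0,r_n)) of the circle C(0,r_n) is contained in some circle centered at the origin. If the function h(z) = L(z)/(a z^j) (extended by h(0) = 1) is analytic on Δ(0,r*), then h ≡ 1, i.e., L(z) = a z^j. -/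
open Metric Set Filter

/-- If `L = a z^j (1 + h.o.t.)` is analytic on `Δ(0,r*)` with `a ≠ 0`, and there is a
sequence of circles `C(0, r_n)`, `r_n → 0`, each of whose images under `L` lies in a circle
centered at the origin, then the analytic factor `h z = L z / (a z^j)` (with `h 0 = 1`)
is identically `1`, i.e. `L z = a z ^ j`. -/
theorem stmt3 (rs : ℝ) (hrs0 : 0 < rs) (hrs1 : rs < 1) (L : ℂ → ℂ)
    (hLan : AnalyticOnNhd ℂ L (Metric.ball (0 : ℂ) rs))
    (hL0 : L 0 = 0)
    (a : ℂ) (ha : a ≠ 0) (j : ℕ) (hj : 0 < j)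
    (h : ℂ → ℂ) (hhan : AnalyticOnNhd ℂ h (Metric.ball (0 : ℂ) rs))
    (hh0 : h 0 = 1)
    (hfac : ∀ z ∈ Metric.ball (0 : ℂ) rs, L z = a * z ^ j * h z)
    (rseq : ℕ → ℝ) (hrpos : ∀ n, 0 < rseq n) (hrlt : ∀ n, rseq n < rs)
    (hrtend : Tendsto rseq atTop (nhds 0))
    (hcirc : ∀ n, ∃ ρ : ℝ, L '' {z : ℂ | ‖z‖ = rseq n} ⊆
        {w : ℂ | ‖w‖ = ρ}) :
    (∀ z ∈ Metric.ball (0 : ℂ) rs, h z = 1) ∧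
      ∀ z ∈ Metric.ball (0 : ℂ) rs, L z = a * z ^ j := by
  have h0mem : (0 : ℂ) ∈ Metric.ball (0 : ℂ) rs := by simpa using hrs0
  -- continuity: h ≠ 0 near 0
  have hcont : ContinuousAt h 0 := (hhan 0 h0mem).continuousAt
  obtain ⟨δ, hδ0, hδ⟩ := Metric.continuousAt_iff.mp hcont 1 one_pos
  -- choose n
  have : ∀ᶠ n in atTop, rseq n < min δ rs :=
    hrtend.eventually (Filter.Tendsto.eventually_lt_const (by positivity) tendsto_id)
  obtain ⟨n, hn⟩ := this.exists
  set r := rseq n with hrdef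
  have hr0 : 0 < r := hrpos n
  have hrδ : r < δ := lt_of_lt_of_le hn (min_le_left _ _)
  have hrrs : r < rs := hrlt n
  have hball : Metric.closedBall (0 : ℂ) r ⊆ Metric.ball (0 : ℂ) rs := by
    intro z hz
    simp only [Metric.mem_closedBall, Metric.mem_ball] at hz ⊢
    linarith
  have hne : ∀ z ∈ Metric.closedBall (0 : ℂ) r, h z ≠ 0 := by
    intro z hz
    have hd : dist z 0 < δ := lt_of_le_of_lt (Metric.mem_closedBall.mp hz) hrδ
    have := hδ hd
    rw [hh0] at this
    intro hz0
    rw [hz0] at this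
    simp at this
  obtain ⟨ρ, hρ⟩ := hcirc n
  -- |h z| is constant c on circle r
  set c : ℝ := ρ / (‖a‖ * r ^ j) with hcdef
  have hden : 0 < ‖a‖ * r ^ j :=
    mul_pos (norm_pos_iff.mpr ha) (pow_pos hr0 j)
  have hconst : ∀ z : ℂ, ‖z‖ = r → ‖h z‖ = c := by
    intro z hz
    have hzmem : z ∈ Metric.ball (0 : ℂ) rs := by
      simp [Complex.dist_eq, hz]; linarith
    have hLz := hfac z hzmem
    have hLabs : ‖L z‖ = ρ := hρ ⟨z, hz, rfl⟩
    rw [hLz] at hLabs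
    simp only [norm_mul, norm_pow, hz] at hLabs
    rw [hcdef, eq_div_iff hden.ne']
    linarith [hLabs]
  -- differentiability facts
  have hdiff : DiffContOnCl ℂ h (Metric.ball (0 : ℂ) r) := by
    refine DifferentiableOn.diffContOnCl ?_
    rw [closure_ball (0 : ℂ) hr0.ne']
    exact fun z hz => ((hhan z (hball hz)).differentiableAt).differentiableWithinAt
  have hfront : frontier (Metric.ball (0 : ℂ) r) = Metric.sphere 0 r :=
    frontier_ball 0 hr0.ne'
  -- max modulus: ‖h 0‖ ≤ c
  have h1c : (1 : ℝ) ≤ c := by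
    have := Complex.norm_le_of_forall_mem_frontier_norm_le isBounded_ball hdiff
      (C := c) (fun z hz => by
        rw [hfront] at hz
        have : ‖z‖ = r := by simpa [Complex.dist_eq] using hz
        exact le_of_eq (hconst z this))
      (z := 0) (subset_closure (by simpa using hr0))
    simpa [hh0] using this
  have hc0 : 0 < c := lt_of_lt_of_le one_pos h1c
  -- min modulus via 1/h : c ≤ 1
  have hc1 : c ≤ 1 := by
    have hdiffinv : DiffContOnCl ℂ (fun z => (h z)⁻¹) (Metric.ball (0 : ℂ) r) := by
      refine DifferentiableOn.diffContOnCl ?_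
      rw [closure_ball (0 : ℂ) hr0.ne']
      intro z hz
      exact (((hhan z (hball hz)).differentiableAt).inv (hne z hz)).differentiableWithinAt
    have := Complex.norm_le_of_forall_mem_frontier_norm_le isBounded_ball hdiffinv
      (C := c⁻¹) (fun z hz => by
        rw [hfront] at hz
        have hzabs : ‖z‖ = r := by simpa [Complex.dist_eq] using hz
        simp only [norm_inv, hconst z hzabs, le_refl])
      (z := 0) (subset_closure (by simpa using hr0))
    rw [hh0] at this
    simp only [norm_inv, norm_one, inv_one] at this
    have hinv : c * c⁻¹ = 1 := mul_inv_cancel₀ hc0.ne'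
    nlinarith
  have hceq : c = 1 := le_antisymm hc1 h1c
  -- |h| ≤ 1 on ball r, with equality at 0 → IsMaxOn
  have hmax : IsMaxOn (norm ∘ h) (Metric.ball (0 : ℂ) r) 0 := by
    intro z hz
    have hle := Complex.norm_le_of_forall_mem_frontier_norm_le isBounded_ball hdiff
      (C := c) (fun w hw => by
        rw [hfront] at hw
        have : ‖w‖ = r := by simpa [Complex.dist_eq] using hw
        exact le_of_eq (hconst w this))
      (z := z) (subset_closure hz)
    simp only [Function.comp, mem_setOf_eq, hh0]
    rw [hceq] at hle
    simpa using hle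
  -- h constant on ball r
  have heq : EqOn h (Function.const ℂ (h 0)) (Metric.ball (0 : ℂ) r) :=
    Complex.eqOn_of_isPreconnected_of_isMaxOn_norm (convex_ball 0 r).isPreconnected
      isOpen_ball
      (fun z hz => ((hhan z (hball (Metric.ball_subset_closedBall hz))).differentiableAt).differentiableWithinAt)
      (by simpa using hr0) hmax
  -- identity theorem
  have hEq : EqOn h (fun _ => (1 : ℂ)) (Metric.ball (0 : ℂ) rs) := by
    apply AnalyticOnNhd.eqOn_of_preconnected_of_eventuallyEq hhan
      (analyticOnNhd_const) (convex_ball 0 rs).isPreconnected h0mem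
    filter_upwards [Metric.ball_mem_nhds (0 : ℂ) hr0] with z hz
    simpa [hh0] using heq hz
  refine ⟨fun z hz => hEq hz, fun z hz => ?_⟩
  rw [hfac z hz, hEq hz, mul_one]
end

section
/- Let j, m ≥ 2 be integers, c < 0 a real number, and define t(r) = j·r and s(r) = m·r + c on I = [-∞, log r*) where log r* < 0. Let B' ⊂ I be nonempty, relatively closed in I, containing -∞, containing a sequence of points tending to -∞, and satisfying s(B') ⊂ B', t(B') ⊂ B', s⁻¹(B') ∩ I ⊂ B', t⁻¹(B') ∩ I ⊂ B'. Then B' = I. -/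
open Set Filter

/-- Real-line version of the key combinatorial lemma: if `B' ⊆ (-∞, log r*)` is
relatively closed, contains a sequence tending to `-∞`, and is invariant (forward, and
backward within the interval) under `t r = j r` and `s r = m r + c` (`j, m ≥ 2`, `c < 0`),
then `B'` is the whole interval `(-∞, log r*)`. -/
theorem stmt4 (rs : ℝ) (hrs0 : 0 < rs) (hrs1 : rs < 1)
    (j m : ℕ) (hj : 2 ≤ j) (hm : 2 ≤ m) (c : ℝ) (hc : c < 0)
    (B' : Set ℝ) (hsub : B' ⊆ Set.Iio (Real.log rs)) (hne : B'.Nonempty)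
    (hclosed : closure B' ∩ Set.Iio (Real.log rs) ⊆ B')
    (hseq : ∃ u : ℕ → ℝ, (∀ n, u n ∈ B') ∧ Tendsto u atTop atBot)
    (hsfwd : (fun r : ℝ => (m : ℝ) * r + c) '' B' ⊆ B')
    (htfwd : (fun r : ℝ => (j : ℝ) * r) '' B' ⊆ B')
    (hsbwd : (fun r : ℝ => (m : ℝ) * r + c) ⁻¹' B' ∩ Set.Iio (Real.log rs) ⊆ B')
    (htbwd : (fun r : ℝ => (j : ℝ) * r) ⁻¹' B' ∩ Set.Iio (Real.log rs) ⊆ B') :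
    B' = Set.Iio (Real.log rs) := by
  set L := Real.log rs with hLdef
  have hL0 : L < 0 := Real.log_neg hrs0 hrs1
  have hJ : (2:ℝ) ≤ (j:ℝ) := by exact_mod_cast hj
  have hM : (2:ℝ) ≤ (m:ℝ) := by exact_mod_cast hm
  have hJ0 : (0:ℝ) < (j:ℝ) := by linarith
  have hM0 : (0:ℝ) < (m:ℝ) := by linarith
  -- elementary moves
  have fwd_t : ∀ x ∈ B', (j:ℝ) * x ∈ B' := fun x hx => htfwd ⟨x, hx, rfl⟩
  have fwd_s : ∀ x ∈ B', (m:ℝ) * x + c ∈ B' := fun x hx => hsfwd ⟨x, hx, rfl⟩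
  have bwd_t : ∀ x, x < L → (j:ℝ) * x ∈ B' → x ∈ B' := fun x h1 h2 => htbwd ⟨h2, h1⟩
  have bwd_s : ∀ x, x < L → (m:ℝ) * x + c ∈ B' → x ∈ B' := fun x h1 h2 => hsbwd ⟨h2, h1⟩
  have pow_mul_le : ∀ (k : ℕ) (x : ℝ), x ≤ 0 → (j:ℝ)^k * x ≤ x := by
    intro k x hx
    have h1 : (1:ℝ) ≤ (j:ℝ)^k := one_le_pow₀ (by linarith)
    nlinarith
  -- iterated forward t
  have fwd_t_iter : ∀ (k : ℕ) (x : ℝ), x ∈ B' → (j:ℝ)^k * x ∈ B' := by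
    intro k
    induction k with
    | zero => intro x hx; simpa using hx
    | succ k ih =>
      intro x hx
      have h := fwd_t _ (ih x hx)
      have heq : (j:ℝ)^(k+1) * x = (j:ℝ) * ((j:ℝ)^k * x) := by ring
      rw [heq]; exact h
  -- iterated backward t
  have bwd_t_iter : ∀ (k : ℕ) (x : ℝ), x < L → (j:ℝ)^k * x ∈ B' → x ∈ B' := by
    intro k
    induction k with
    | zero => intro x _ hx; simpa using hx
    | succ k ih =>
      intro x hxL hx
      have hx0 : x ≤ 0 := le_of_lt (hxL.trans hL0)
      have hkL : (j:ℝ)^k * x < L := lt_of_le_of_lt (pow_mul_le k x hx0) hxL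
      have heq : (j:ℝ)^(k+1) * x = (j:ℝ) * ((j:ℝ)^k * x) := by ring
      rw [heq] at hx
      exact ih x hxL (bwd_t _ hkL hx)
  -- the small upward translation step
  set d : ℝ := ((j:ℝ) - 1) * (-c) with hddef
  have hd : 0 < d := mul_pos (by linarith) (by linarith)
  have key : ∀ (k : ℕ) (x : ℝ), x ∈ B' → x < (m:ℝ)*L + c → x + d < L →
      x + d/(j:ℝ)^(k+1) ∈ B' := by
    intro k x hx h1 h2
    have hxL : x < L := hsub hx
    have hx0 : x ≤ 0 := le_of_lt (hxL.trans hL0)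
    have hstep1 : (j:ℝ)^k * x ∈ B' := fwd_t_iter k x hx
    set z : ℝ := ((j:ℝ)^k * x - c)/(m:ℝ) with hzdef
    have hz1 : (m:ℝ) * z + c = (j:ℝ)^k * x := by
      rw [hzdef]; field_simp; ring
    have hzL : z < L := by
      have hle : (j:ℝ)^k * x ≤ x := pow_mul_le k x hx0
      rw [hzdef, div_lt_iff₀ hM0]
      nlinarith
    have hz : z ∈ B' := bwd_s z hzL (by rw [hz1]; exact hstep1)
    have h3 : (m:ℝ) * ((j:ℝ)*z) + c ∈ B' := fwd_s _ (fwd_t _ hz)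
    have hw : x + d/(j:ℝ)^(k+1) < L := by
      have hdiv : d/(j:ℝ)^(k+1) ≤ d := div_le_self hd.le (one_le_pow₀ (by linarith))
      linarith
    have h4 : (m:ℝ) * ((j:ℝ)*z) + c = (j:ℝ)^(k+1) * (x + d/(j:ℝ)^(k+1)) := by
      have hjk : (j:ℝ)^(k+1) ≠ 0 := by positivity
      rw [hzdef, hddef]; field_simp
      ring
    rw [h4] at h3
    exact bwd_t_iter (k+1) _ hw h3
  -- density far to the left
  set X : ℝ := min ((m:ℝ)*L + c) (L - d) with hXdef
  have hXL : X ≤ L - d := min_le_right _ _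
  have hdense : ∀ x : ℝ, x < X → x ∈ B' := by
    intro x hxX
    have hx1 : x < (m:ℝ)*L + c := lt_of_lt_of_le hxX (min_le_left _ _)
    have hx2 : x + d < L := by linarith [lt_of_lt_of_le hxX hXL]
    have hxL : x < L := by linarith
    refine hclosed ⟨?_, hxL⟩
    rw [Metric.mem_closure_iff]
    intro ε hε
    obtain ⟨k, hk⟩ : ∃ k : ℕ, d/ε < (j:ℝ)^k := pow_unbounded_of_one_lt _ (by linarith)
    set e : ℝ := d/(j:ℝ)^(k+1) with hedef
    have he : 0 < e := div_pos hd (pow_pos hJ0 _)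
    have heε : e < ε := by
      rw [hedef, div_lt_iff₀ (pow_pos hJ0 _)]
      have h1 : d < ε * (j:ℝ)^k := by
        rw [div_lt_iff₀ hε] at hk; linarith
      have h2 : (j:ℝ)^k ≤ (j:ℝ)^(k+1) := by
        have := pow_le_pow_right₀ (by linarith : (1:ℝ) ≤ (j:ℝ)) (Nat.le_succ k)
        exact this
      nlinarith
    obtain ⟨u, huB, huT⟩ := hseq
    obtain ⟨n, hn⟩ := (huT.eventually (eventually_le_atBot x)).exists
    have main : ∀ N : ℕ, u n + N*e ≤ x → u n + N*e ∈ B' := by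
      intro N
      induction N with
      | zero => intro _; simpa using huB n
      | succ N ih =>
        intro hle
        have hle' : u n + N*e ≤ x := by
          push_cast at hle; nlinarith
        have hmem := ih hle'
        have hcond1 : u n + N*e < (m:ℝ)*L + c := lt_of_le_of_lt hle' hx1
        have hcond2 : (u n + N*e) + d < L := by linarith
        have := key k (u n + N*e) hmem hcond1 hcond2
        have heq : u n + (N+1 : ℕ)*e = (u n + N*e) + d/(j:ℝ)^(k+1) := by
          push_cast; rw [hedef]; ring
        rw [heq]
        exact this
    set N : ℕ := Nat.floor ((x - u n)/e) with hNdef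
    have hnum : 0 ≤ (x - u n)/e := div_nonneg (by linarith) he.le
    have hN1 : (N:ℝ) ≤ (x - u n)/e := Nat.floor_le hnum
    have hN2 : (x - u n)/e < N + 1 := Nat.lt_floor_add_one _
    have hp1 : u n + N*e ≤ x := by
      rw [le_div_iff₀ he] at hN1; linarith
    have hp2 : x - u n < (N+1)*e := by
      rw [div_lt_iff₀ he] at hN2; linarith
    refine ⟨u n + N*e, main N hp1, ?_⟩
    rw [Real.dist_eq, abs_of_nonneg (by linarith)]
    linarith
  -- conclusion
  apply Set.Subset.antisymm hsub
  intro x hx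
  have hxL : x < L := hx
  have hx0 : x < 0 := hxL.trans hL0
  obtain ⟨nn, hnn⟩ : ∃ nn : ℕ, X / x < (j:ℝ)^nn := pow_unbounded_of_one_lt _ (by linarith)
  have hlt : (j:ℝ)^nn * x < X := by
    rw [div_lt_iff_of_neg hx0] at hnn
    linarith [hnn]
  exact bwd_t_iter nn x hxL (hdense _ hlt)
end

section
/- Define t(r) = j·r and s(r) = r₀ + m·(r - r₀) for integers j, m ≥ 2 and real r₀ > 0. Then for every real r and every positive integer n, (t⁻ⁿ ∘ s⁻ⁿ ∘ tⁿ ∘ sⁿ)(r) = r - r₀ + dₙ, where dₙ = r₀ (mⁿ + jⁿ - 1)/(mⁿ jⁿ); moreover 0 < dₙ ≤ r₀ and dₙ → 0 as n → ∞. -/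
open Filter

lemma iter_mul (c : ℝ) : ∀ (n : ℕ) (r : ℝ), (fun r : ℝ => c * r)^[n] r = c ^ n * r := by
  intro n
  induction n with
  | zero => simp
  | succ k ih => intro r; rw [Function.iterate_succ_apply, ih, pow_succ]; ring

lemma iter_div (c : ℝ) : ∀ (n : ℕ) (r : ℝ), (fun r : ℝ => r / c)^[n] r = r / c ^ n := by
  intro n
  induction n with
  | zero => simp
  | succ k ih => intro r; rw [Function.iterate_succ_apply, ih, pow_succ, div_div]; ring_nf

lemma iter_aff (r0 c : ℝ) : ∀ (n : ℕ) (r : ℝ),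
    (fun r : ℝ => r0 + c * (r - r0))^[n] r = r0 + c ^ n * (r - r0) := by
  intro n
  induction n with
  | zero => simp
  | succ k ih => intro r; rw [Function.iterate_succ_apply, ih, pow_succ]; ring

lemma iter_aff_div (r0 c : ℝ) : ∀ (n : ℕ) (r : ℝ),
    (fun r : ℝ => r0 + (r - r0) / c)^[n] r = r0 + (r - r0) / c ^ n := by
  intro n
  induction n with
  | zero => simp
  | succ k ih => intro r; rw [Function.iterate_succ_apply, ih, add_sub_cancel_left, div_div, pow_succ]; ring

/-- For `t r = j r`, `s r = r₀ + m (r - r₀)` with inverses `t⁻¹ r = r / j`,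
`s⁻¹ r = r₀ + (r - r₀)/m`, one has `(t⁻ⁿ ∘ s⁻ⁿ ∘ tⁿ ∘ sⁿ)(r) = r - r₀ + dₙ` where
`dₙ = r₀ (mⁿ + jⁿ - 1)/(mⁿ jⁿ)`; moreover `0 < dₙ ≤ r₀` and `dₙ → 0`. -/
theorem stmt6 (j m : ℕ) (hj : 2 ≤ j) (hm : 2 ≤ m) (r0 : ℝ) (hr0 : 0 < r0) :
    (∀ (r : ℝ) (n : ℕ),
      (fun r : ℝ => r / (j : ℝ))^[n]
        ((fun r : ℝ => r0 + (r - r0) / (m : ℝ))^[n]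
          ((fun r : ℝ => (j : ℝ) * r)^[n]
            ((fun r : ℝ => r0 + (m : ℝ) * (r - r0))^[n] r)))
        = r - r0 + r0 * ((m : ℝ) ^ n + (j : ℝ) ^ n - 1) / ((m : ℝ) ^ n * (j : ℝ) ^ n)) ∧
    (∀ n : ℕ, 0 < r0 * ((m : ℝ) ^ n + (j : ℝ) ^ n - 1) / ((m : ℝ) ^ n * (j : ℝ) ^ n) ∧
        r0 * ((m : ℝ) ^ n + (j : ℝ) ^ n - 1) / ((m : ℝ) ^ n * (j : ℝ) ^ n) ≤ r0) ∧
    Tendsto (fun n : ℕ =>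
        r0 * ((m : ℝ) ^ n + (j : ℝ) ^ n - 1) / ((m : ℝ) ^ n * (j : ℝ) ^ n))
      atTop (nhds 0) := by
  have hj1 : (1 : ℝ) < (j : ℝ) := by exact_mod_cast lt_of_lt_of_le one_lt_two hj
  have hm1 : (1 : ℝ) < (m : ℝ) := by exact_mod_cast lt_of_lt_of_le one_lt_two hm
  have hj0 : (0 : ℝ) < (j : ℝ) := lt_trans one_pos hj1
  have hm0 : (0 : ℝ) < (m : ℝ) := lt_trans one_pos hm1
  have hjp : ∀ n : ℕ, (0 : ℝ) < (j : ℝ) ^ n := fun n => pow_pos hj0 n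
  have hmp : ∀ n : ℕ, (0 : ℝ) < (m : ℝ) ^ n := fun n => pow_pos hm0 n
  have hj1p : ∀ n : ℕ, (1 : ℝ) ≤ (j : ℝ) ^ n := fun n => one_le_pow₀ (le_of_lt hj1)
  have hm1p : ∀ n : ℕ, (1 : ℝ) ≤ (m : ℝ) ^ n := fun n => one_le_pow₀ (le_of_lt hm1)
  refine ⟨?_, ?_, ?_⟩
  · intro r n
    rw [iter_aff, iter_mul, iter_aff_div, iter_div]
    have h1 : (j : ℝ) ^ n ≠ 0 := ne_of_gt (hjp n)
    have h2 : (m : ℝ) ^ n ≠ 0 := ne_of_gt (hmp n)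
    field_simp
    ring
  · intro n
    have hnum : (0 : ℝ) < (m : ℝ) ^ n + (j : ℝ) ^ n - 1 := by
      have := hm1p n; have := hj1p n; linarith
    constructor
    · positivity
    · rw [div_le_iff₀ (by positivity)]
      have key : (m : ℝ) ^ n + (j : ℝ) ^ n - 1 ≤ (m : ℝ) ^ n * (j : ℝ) ^ n := by
        nlinarith [hm1p n, hj1p n]
      nlinarith
  · have key : ∀ n : ℕ, r0 * ((m : ℝ) ^ n + (j : ℝ) ^ n - 1) / ((m : ℝ) ^ n * (j : ℝ) ^ n)
        = r0 * ((1 / m : ℝ) ^ n) + r0 * ((1 / j : ℝ) ^ n) - r0 * (((1 / m : ℝ) * (1 / j)) ^ n) := by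
      intro n
      have h1 : (j : ℝ) ^ n ≠ 0 := ne_of_gt (hjp n)
      have h2 : (m : ℝ) ^ n ≠ 0 := ne_of_gt (hmp n)
      rw [mul_pow]
      simp only [div_pow, one_pow]
      field_simp
      ring
    simp only [key]
    have t1 : Tendsto (fun n : ℕ => ((1 / m : ℝ)) ^ n) atTop (nhds 0) :=
      tendsto_pow_atTop_nhds_zero_of_lt_one (by positivity) (by rw [div_lt_one hm0]; exact hm1)
    have t2 : Tendsto (fun n : ℕ => ((1 / j : ℝ)) ^ n) atTop (nhds 0) :=
      tendsto_pow_atTop_nhds_zero_of_lt_one (by positivity) (by rw [div_lt_one hj0]; exact hj1)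
    have t3 : Tendsto (fun n : ℕ => (((1 / m : ℝ)) * (1 / j)) ^ n) atTop (nhds 0) := by
      apply tendsto_pow_atTop_nhds_zero_of_lt_one (by positivity)
      calc (1 / m : ℝ) * (1 / j) < 1 * 1 := by
            apply mul_lt_mul' (by rw [div_le_one hm0]; linarith) (by rw [div_lt_one hj0]; exact hj1) (by positivity) one_pos
        _ = 1 := by ring
      
    have := ((t1.const_mul r0).add (t2.const_mul r0)).sub (t3.const_mul r0)
    simpa using this
end

section
/- Let f, g be polynomials of degree ≥ 2 with G = ⟨f, g⟩, and let E = E(G) be the smallest closed set with ≥ 3 points completely invariant under both f and g. If E has nonempty interior, then E = ℂ̄. -/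
open Filter Set Topology

noncomputable section

noncomputable instance : UniformSpace (OnePoint ℂ) := uniformSpaceOfCompactR1

/-- Extension of a polynomial to the Riemann sphere, fixing `∞`. -/
def polyMap (p : Polynomial ℂ) : Function.End (OnePoint ℂ) :=
  OnePoint.map (fun z => p.eval z)

/-- A set is completely invariant under `f`. -/
def CInv (f : Function.End (OnePoint ℂ)) (S : Set (OnePoint ℂ)) : Prop :=
  f '' S ⊆ S ∧ f ⁻¹' S ⊆ S

/-- The smallest closed set with at least three points that is completely invariant
under every member of `fs`. -/
def EG (fs : Set (Function.End (OnePoint ℂ))) : Set (OnePoint ℂ) :=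
  ⋂₀ {S : Set (OnePoint ℂ) | IsClosed S ∧ 3 ≤ S.encard ∧ ∀ f ∈ fs, CInv f S}

/-- The set of normality (Fatou set) of a family of self-maps of the sphere:
points having a neighborhood on which the family is normal (equicontinuous). -/
def fatouSet (H : Set (Function.End (OnePoint ℂ))) : Set (OnePoint ℂ) :=
  {z | ∃ U ∈ nhds z, EquicontinuousOn (fun h : H => (h.1 : OnePoint ℂ → OnePoint ℂ)) U}

/-- The Julia set of a family of self-maps of the sphere. -/
def juliaSG (H : Set (Function.End (OnePoint ℂ))) : Set (OnePoint ℂ) :=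
  (fatouSet H)ᶜ

/-- The semigroup (under composition) generated by a set of self-maps of the sphere. -/
def semigroupGen (fs : Set (Function.End (OnePoint ℂ))) : Set (Function.End (OnePoint ℂ)) :=
  (Subsemigroup.closure fs : Subsemigroup (Function.End (OnePoint ℂ)))

/-- The Julia set of a single map: complement of the set of normality of its iterates. -/
def juliaSet (f : Function.End (OnePoint ℂ)) : Set (OnePoint ℂ) :=
  juliaSG (semigroupGen {f})

/-- `f` is a rational map of degree at least two on the Riemann sphere. -/
def IsRatMapD2 (f : Function.End (OnePoint ℂ)) : Prop :=
  Continuous f ∧ ∃ p q : Polynomial ℂ, IsCoprime p q ∧ 2 ≤ max p.natDegree q.natDegree ∧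
    ∀ z : ℂ, q.eval z ≠ 0 → f (z : OnePoint ℂ) = ((p.eval z / q.eval z : ℂ) : OnePoint ℂ)



section Aux

open Polynomial OnePoint

variable {p : Polynomial ℂ}

lemma degPos (hp : 2 ≤ p.natDegree) : 0 < p.degree := by
  have : 0 < p.natDegree := by omega
  exact natDegree_pos_iff_degree_pos.mp this

lemma evalSurj (hp : 2 ≤ p.natDegree) : Function.Surjective (fun z : ℂ => p.eval z) := by
  intro w
  have hd : 0 < (p - C w).degree := by
    have h1 : (p - C w).natDegree = p.natDegree := natDegree_sub_C
    have : 0 < (p - C w).natDegree := by omega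
    exact natDegree_pos_iff_degree_pos.mp this
  obtain ⟨z, hz⟩ := Complex.exists_root hd
  refine ⟨z, ?_⟩
  have := hz
  simp only [IsRoot, eval_sub, eval_C, sub_eq_zero] at this
  exact this

lemma evalOpen (hp : 2 ≤ p.natDegree) : IsOpenMap (fun z : ℂ => p.eval z) := by
  have ha : AnalyticOnNhd ℂ (fun z : ℂ => p.eval z) Set.univ := by
    intro z _
    exact (p.differentiable).analyticAt z
  rcases ha.is_constant_or_isOpen isPreconnected_univ with ⟨w, hw⟩ | h
  · exfalso
    have : p = C w := by
      apply Polynomial.funext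
      intro x
      simp [hw x (Set.mem_univ x)]
    rw [this, natDegree_C] at hp
    omega
  · intro U hU
    exact h U (Set.subset_univ U) hU

lemma evalTendsto (hp : 2 ≤ p.natDegree) :
    Tendsto (fun z : ℂ => p.eval z) (cocompact ℂ) (cocompact ℂ) := by
  apply tendsto_cocompact_of_tendsto_dist_comp_atTop (0 : ℂ)
  simp only [dist_zero_right]
  exact p.tendsto_norm_atTop (degPos hp) tendsto_norm_cocompact_atTop

lemma polyMapCont (hp : 2 ≤ p.natDegree) : Continuous (polyMap p) := by
  apply OnePoint.continuous_map p.continuous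
  rw [coclosedCompact_eq_cocompact]
  exact evalTendsto hp

lemma preimage_coe_image_polyMap (U : Set (OnePoint ℂ)) :
    ((↑) : ℂ → OnePoint ℂ) ⁻¹' (polyMap p '' U) = (fun z : ℂ => p.eval z) '' ((↑) ⁻¹' U) := by
  ext w
  simp only [Set.mem_preimage, Set.mem_image]
  constructor
  · rintro ⟨x, hxU, hx⟩
    induction x using OnePoint.rec with
    | infty => simp [polyMap] at hx
    | coe z =>
      refine ⟨z, hxU, ?_⟩
      have : polyMap p (z : OnePoint ℂ) = ((p.eval z : ℂ) : OnePoint ℂ) := rfl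
      rw [this, OnePoint.coe_eq_coe] at hx
      exact hx
  · rintro ⟨z, hz, hw⟩
    refine ⟨(z : OnePoint ℂ), hz, ?_⟩
    have : polyMap p (z : OnePoint ℂ) = ((p.eval z : ℂ) : OnePoint ℂ) := rfl
    rw [this, hw]

lemma polyMapOpen (hp : 2 ≤ p.natDegree) : IsOpenMap (polyMap p) := by
  intro U hU
  by_cases hinf : ∞ ∈ U
  · have hinf' : ∞ ∈ polyMap p '' U := ⟨∞, hinf, rfl⟩
    rw [OnePoint.isOpen_iff_of_mem' hinf'] at *
    rw [preimage_coe_image_polyMap]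
    obtain ⟨hc, ho⟩ := (OnePoint.isOpen_iff_of_mem' hinf).mp hU
    constructor
    · have hsub : ((fun z : ℂ => p.eval z) '' ((↑) ⁻¹' U))ᶜ ⊆
          (fun z : ℂ => p.eval z) '' (((↑) : ℂ → OnePoint ℂ) ⁻¹' U)ᶜ := by
        intro w hw
        obtain ⟨z, hz⟩ := evalSurj hp w
        exact ⟨z, fun hzU => hw ⟨z, hzU, hz⟩, hz⟩
      exact (hc.image p.continuous).of_isClosed_subset
        (isOpen_compl_iff.mp (by simpa using ((evalOpen hp) _ ho).isClosed_compl.isOpen_compl))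
        hsub
    · exact evalOpen hp _ ho
  · have hinf' : ∞ ∉ polyMap p '' U := by
      rintro ⟨x, hxU, hx⟩
      induction x using OnePoint.rec with
      | infty => exact hinf hxU
      | coe z => simp [polyMap] at hx
    rw [OnePoint.isOpen_iff_of_notMem hinf']
    rw [preimage_coe_image_polyMap]
    exact evalOpen hp _ ((OnePoint.isOpen_iff_of_notMem hinf).mp hU)

lemma open_encard_three {U : Set (OnePoint ℂ)} (hU : IsOpen U) (hne : U.Nonempty) :
    3 ≤ U.encard := by
  have hVo : IsOpen (((↑) : ℂ → OnePoint ℂ) ⁻¹' U) := hU.preimage OnePoint.continuous_coe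
  have hVne : (((↑) : ℂ → OnePoint ℂ) ⁻¹' U).Nonempty := by
    by_contra h
    rw [Set.not_nonempty_iff_eq_empty] at h
    obtain ⟨x, hx⟩ := hne
    have hxinf : x = ∞ := by
      induction x using OnePoint.rec with
      | infty => rfl
      | coe z =>
        exact absurd hx (by simpa using Set.eq_empty_iff_forall_notMem.mp h z)
    subst hxinf
    have := ((OnePoint.isOpen_iff_of_mem' hx).mp hU).1
    rw [h, Set.compl_empty] at this
    exact (IsCompact.ne_univ this) rfl
  obtain ⟨z, hz⟩ := hVne
  obtain ⟨ε, hε, hball⟩ := Metric.isOpen_iff.mp hVo z hz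
  set z₁ := z + (ε / 2 : ℝ)
  set z₂ := z + (ε / 3 : ℝ)
  have hz₁ : z₁ ∈ Metric.ball z ε := by
    simp only [z₁, Metric.mem_ball, dist_self_add_left]
    rw [Complex.norm_real, Real.norm_eq_abs, abs_of_pos (by linarith)]
    linarith
  have hz₂ : z₂ ∈ Metric.ball z ε := by
    simp only [z₂, Metric.mem_ball, dist_self_add_left]
    rw [Complex.norm_real, Real.norm_eq_abs, abs_of_pos (by linarith)]
    linarith
  have h01 : z ≠ z₁ := by
    simp only [z₁, ne_eq, left_eq_add, Complex.ofReal_eq_zero]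
    intro h; rw [_root_.div_eq_zero_iff] at h; rcases h with h | h <;> norm_num at h
    · linarith
  have h02 : z ≠ z₂ := by
    simp only [z₂, ne_eq, left_eq_add, Complex.ofReal_eq_zero]
    intro h; rw [_root_.div_eq_zero_iff] at h; rcases h with h | h <;> norm_num at h
    · linarith
  have h12 : z₁ ≠ z₂ := by
    simp only [z₁, z₂, ne_eq, add_right_inj]
    intro h
    rw [Complex.ofReal_inj] at h
    have : ε = 0 := by linarith [h]
    linarith
  have hsub : ({(z : OnePoint ℂ), (z₁ : OnePoint ℂ), (z₂ : OnePoint ℂ)} : Set (OnePoint ℂ)) ⊆ U := by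
    intro x hx
    rcases hx with h | h | h <;> subst h
    · exact hz
    · exact hball hz₁
    · exact hball hz₂
  calc (3 : ℕ∞) = ({(z : OnePoint ℂ), (z₁ : OnePoint ℂ), (z₂ : OnePoint ℂ)} : Set (OnePoint ℂ)).encard := by
        rw [Set.encard_insert_of_notMem, Set.encard_insert_of_notMem, Set.encard_singleton]
        · rfl
        · simp only [Set.mem_singleton_iff, OnePoint.coe_eq_coe]
          exact h12
        · simp only [Set.mem_insert_iff, Set.mem_singleton_iff, OnePoint.coe_eq_coe]
          push_neg
          exact ⟨h01, h02⟩
    _ ≤ U.encard := Set.encard_le_encard hsub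

lemma cinv_compl {h : Function.End (OnePoint ℂ)} {S : Set (OnePoint ℂ)}
    (hS : CInv h S) : CInv h Sᶜ := by
  constructor
  · rintro _ ⟨x, hx, rfl⟩
    exact fun hfx => hx (hS.2 hfx)
  · intro x hx hxS
    exact hx (hS.1 ⟨x, hxS, rfl⟩)

lemma cinv_closure {h : Function.End (OnePoint ℂ)} {S : Set (OnePoint ℂ)}
    (hc : Continuous h) (ho : IsOpenMap h) (hS : CInv h S) : CInv h (closure S) := by
  constructor
  · calc h '' closure S ⊆ closure (h '' S) := image_closure_subset_closure_image hc
      _ ⊆ closure S := closure_mono hS.1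
  · calc h ⁻¹' closure S ⊆ closure (h ⁻¹' S) := ho.preimage_closure_subset_closure_preimage
      _ ⊆ closure S := closure_mono hS.2

lemma cinv_inter {h : Function.End (OnePoint ℂ)} {S T : Set (OnePoint ℂ)}
    (hS : CInv h S) (hT : CInv h T) : CInv h (S ∩ T) := by
  constructor
  · rintro _ ⟨x, ⟨hxS, hxT⟩, rfl⟩
    exact ⟨hS.1 ⟨x, hxS, rfl⟩, hT.1 ⟨x, hxT, rfl⟩⟩
  · rintro x ⟨hxS, hxT⟩
    exact ⟨hS.2 hxS, hT.2 hxT⟩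

end Aux

/-- If `E(G)` has nonempty interior, for `G` generated by two polynomials of degree at
least two, then `E(G)` is the whole sphere. -/
theorem stmt12 (f g : Polynomial ℂ) (hf : 2 ≤ f.natDegree) (hg : 2 ≤ g.natDegree)
    (hint : (interior (EG {polyMap f, polyMap g})).Nonempty) :
    EG {polyMap f, polyMap g} = Set.univ := by
  classical
  set fs := ({polyMap f, polyMap g} : Set (Function.End (OnePoint ℂ))) with hfs
  have hco : ∀ h ∈ fs, Continuous h ∧ IsOpenMap h := by
    intro h hh
    simp only [hfs, Set.mem_insert_iff, Set.mem_singleton_iff] at hh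
    rcases hh with rfl | rfl
    · exact ⟨polyMapCont hf, polyMapOpen hf⟩
    · exact ⟨polyMapCont hg, polyMapOpen hg⟩
  set F := {S : Set (OnePoint ℂ) | IsClosed S ∧ 3 ≤ S.encard ∧ ∀ h ∈ fs, CInv h S} with hF
  have hEdef : EG fs = ⋂₀ F := rfl
  set E := ⋂₀ F with hEdef2
  have hint' : (interior E).Nonempty := hint
  show E = Set.univ
  have hEclosed : IsClosed E := isClosed_sInter fun S hS => hS.1
  have hEinv : ∀ h ∈ fs, CInv h E := by
    intro h hh
    constructor
    · rintro _ ⟨x, hx, rfl⟩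
      exact fun S hS => (hS.2.2 h hh).1 ⟨x, hx S hS, rfl⟩
    · intro x hx S hS
      exact (hS.2.2 h hh).2 (hx S hS)
  have hEcard : 3 ≤ E.encard :=
    le_trans (open_encard_three isOpen_interior hint') (Set.encard_le_encard interior_subset)
  have hEF : E ∈ F := ⟨hEclosed, hEcard, hEinv⟩
  set B := frontier E with hB
  have hBclosed : IsClosed B := isClosed_frontier
  have hBinv : ∀ h ∈ fs, CInv h B := by
    intro h hh
    have h1 : CInv h (closure Eᶜ) :=
      cinv_closure (hco h hh).1 (hco h hh).2 (cinv_compl (hEinv h hh))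
    have h2 : CInv h (closure E) :=
      cinv_closure (hco h hh).1 (hco h hh).2 (hEinv h hh)
    rw [hB, frontier_eq_closure_inter_closure]
    exact cinv_inter h2 h1
  have hBsmall : ¬ (3 ≤ B.encard) := by
    intro h3
    have hBF : B ∈ F := ⟨hBclosed, h3, hBinv⟩
    have hEB : E ⊆ B := Set.sInter_subset_of_mem hBF
    obtain ⟨x, hx⟩ := hint'
    have hxB : x ∈ B := hEB (interior_subset hx)
    rw [hB, frontier, Set.mem_diff] at hxB
    exact hxB.2 hx
  have hBfin : B.Finite := by
    rw [← Set.encard_lt_top_iff, lt_top_iff_ne_top]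
    exact ne_top_of_lt (not_le.mp hBsmall)
  -- the complement of the frontier is preconnected
  have hpreB : (((↑) : ℂ → OnePoint ℂ) ⁻¹' B).Countable :=
    (hBfin.preimage OnePoint.coe_injective.injOn).countable
  set A := (((↑) : ℂ → OnePoint ℂ) ⁻¹' B)ᶜ with hA
  have hAcon : IsPathConnected A :=
    hpreB.isPathConnected_compl_of_one_lt_rank
      (by rw [Complex.rank_real_complex]; norm_num)
  have hsub1 : ((↑) : ℂ → OnePoint ℂ) '' A ⊆ Bᶜ := by
    rintro _ ⟨z, hz, rfl⟩
    exact hz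
  have hcl : Bᶜ ⊆ closure (((↑) : ℂ → OnePoint ℂ) '' A) := by
    intro x hx
    induction x using OnePoint.rec with
    | coe z => exact subset_closure ⟨z, hx, rfl⟩
    | infty =>
      rw [mem_closure_iff]
      intro o ho hxo
      obtain ⟨hcomp, hoo⟩ := (OnePoint.isOpen_iff_of_mem' hxo).mp ho
      have hne : ((((↑) : ℂ → OnePoint ℂ) ⁻¹' o) ∩ A).Nonempty := by
        by_contra hcon
        rw [Set.not_nonempty_iff_eq_empty] at hcon
        have hsubu : (Set.univ : Set ℂ) ⊆
            ((((↑) : ℂ → OnePoint ℂ) ⁻¹' o))ᶜ ∪ (((↑) : ℂ → OnePoint ℂ) ⁻¹' B) := by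
          intro z _
          by_cases hz : z ∈ (((↑) : ℂ → OnePoint ℂ) ⁻¹' o)
          · right
            by_contra hzB
            exact Set.eq_empty_iff_forall_notMem.mp hcon z ⟨hz, hzB⟩
          · left; exact hz
        have hcpt : IsCompact (((((↑) : ℂ → OnePoint ℂ) ⁻¹' o))ᶜ ∪
            (((↑) : ℂ → OnePoint ℂ) ⁻¹' B)) :=
          hcomp.union (hBfin.preimage OnePoint.coe_injective.injOn).isCompact
        exact hcpt.ne_univ (Set.eq_univ_of_univ_subset hsubu)
      obtain ⟨z, hzo, hzA⟩ := hne
      exact ⟨(z : OnePoint ℂ), hzo, ⟨z, hzA, rfl⟩⟩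
  have hBcPre : IsPreconnected (Bᶜ : Set (OnePoint ℂ)) :=
    (hAcon.isConnected.isPreconnected.image _ OnePoint.continuous_coe.continuousOn).subset_closure
      hsub1 hcl
  -- conclude
  by_contra hne
  have hEcne : (Eᶜ : Set (OnePoint ℂ)).Nonempty := Set.nonempty_compl.mpr hne
  have hfr : B = E \ interior E := by rw [hB, hEclosed.frontier_eq]
  have hcover : (Bᶜ : Set (OnePoint ℂ)) ⊆ Eᶜ ∪ interior E := by
    intro x hx
    by_cases hxE : x ∈ E
    · right
      by_contra hxi
      exact hx (by rw [hfr]; exact ⟨hxE, hxi⟩)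
    · left; exact hxE
  obtain ⟨xc, hxc⟩ := hEcne
  obtain ⟨xi, hxi⟩ := hint'
  have hxcB : xc ∈ Bᶜ := by
    intro hxcB
    rw [hfr] at hxcB
    exact hxc hxcB.1
  have hxiB : xi ∈ Bᶜ := by
    intro hxiB
    rw [hfr] at hxiB
    exact hxiB.2 hxi
  obtain ⟨y, hyB, hyEc, hyi⟩ :=
    hBcPre Eᶜ (interior E) hEclosed.isOpen_compl isOpen_interior hcover
      ⟨xc, hxcB, hxc⟩ ⟨xi, hxiB, hxi⟩
  exact hyEc (interior_subset hyi)

end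
end

section
/- Let f, g be polynomials of degree ≥ 2 and suppose the Green's functions G_f and G_g (with pole at ∞) of the unbounded Fatou components F_∞ and G_∞ agree on the unbounded component C of F_∞ ∩ G_∞. Then J_f = J_g. -/
open Filter Set Topology

noncomputable section

/-- `Gh` behaves like the Green's function (with pole at `∞`) of the unbounded Fatou
component `F` of a polynomial: positive and continuous on `F \ {∞}`, tending to `0` at
every boundary point of `F`. -/
def IsGreenOn (F : Set (OnePoint ℂ)) (Gh : OnePoint ℂ → ℝ) : Prop :=
  (∀ z ∈ F, z ≠ OnePoint.infty → 0 < Gh z) ∧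
    ContinuousOn Gh (F \ {OnePoint.infty}) ∧
    ∀ z₀ ∈ frontier F, Filter.Tendsto Gh (nhdsWithin z₀ (F \ {OnePoint.infty})) (nhds 0)

/-! ### Infrastructure -/

section Infra
open OnePoint Metric Polynomial

local notation "𝕊" => OnePoint ℂ

lemma unif_eq : uniformity 𝕊 = nhdsSet (Set.diagonal 𝕊) := rfl

lemma mem_nhds_diag {V : Set (𝕊 × 𝕊)} (hV : V ∈ uniformity 𝕊) (x : 𝕊) : V ∈ nhds (x, x) :=
  nhds_le_nhdsSet (Set.mem_diagonal x) (unif_eq ▸ hV)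

lemma isPreconnected_norm_gt {r : ℝ} (hr : 0 ≤ r) : IsPreconnected {z : ℂ | r < ‖z‖} := by
  have h1 : IsPreconnected ((Set.Ioi r) ×ˢ (Metric.sphere (0:ℂ) 1)) :=
    (isPreconnected_Ioi).prod (isPreconnected_sphere (by rw [Complex.rank_real_complex]; norm_num) 0 1)
  have h2 : (fun p : ℝ × ℂ => p.1 • p.2) '' ((Set.Ioi r) ×ˢ (Metric.sphere (0:ℂ) 1))
      = {z : ℂ | r < ‖z‖} := by
    ext z
    constructor
    · rintro ⟨⟨t, w⟩, ⟨ht, hw⟩, rfl⟩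
      have hw1 : ‖w‖ = 1 := by simpa using hw
      have : ‖t • w‖ = |t| * ‖w‖ := norm_smul t w
      simp only [Set.mem_setOf_eq, this, hw1, mul_one]
      rw [abs_of_pos (lt_of_le_of_lt hr ht)]
      exact ht
    · intro hz
      have hz0 : z ≠ 0 := by
        intro h; rw [h] at hz; simp at hz; exact absurd hz (not_lt.2 hr)
      refine ⟨(‖z‖, ‖z‖⁻¹ • z), ⟨hz, ?_⟩, ?_⟩
      · have : ‖(‖z‖⁻¹ • z : ℂ)‖ = 1 := by
          rw [norm_smul, norm_inv, norm_norm, inv_mul_cancel₀ (norm_ne_zero_iff.2 hz0)]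
        simpa using this
      · simp only [smul_smul]
        rw [mul_inv_cancel₀ (norm_ne_zero_iff.2 hz0), one_smul]
  rw [← h2]
  exact h1.image _ (continuous_fst.smul continuous_snd).continuousOn

/-- The punctured neighborhood of `∞` consisting of points of norm `> r`, plus `∞`. -/
def sphereGt (r : ℝ) : Set 𝕊 := ((OnePoint.some : ℂ → OnePoint ℂ) '' {z : ℂ | r < ‖z‖}) ∪ {∞}

lemma sphereGt_eq_compl (r : ℝ) :
    sphereGt r = ((OnePoint.some : ℂ → OnePoint ℂ) '' (Metric.closedBall 0 r))ᶜ := by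
  rw [OnePoint.compl_image_coe]
  have : (Metric.closedBall (0:ℂ) r)ᶜ = {z : ℂ | r < ‖z‖} := by
    ext z; simp [Metric.mem_closedBall, not_le]
  rw [this]; rfl

lemma isOpen_sphereGt (r : ℝ) : IsOpen (sphereGt r) := by
  rw [sphereGt_eq_compl]
  exact (OnePoint.isClosed_image_coe.2
    ⟨Metric.isClosed_closedBall, (isCompact_closedBall 0 r)⟩).isOpen_compl

lemma infty_mem_sphereGt (r : ℝ) : (∞ : 𝕊) ∈ sphereGt r := Or.inr rfl

lemma sphereGt_mem_nhds (r : ℝ) : sphereGt r ∈ nhds (∞ : 𝕊) :=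
  (isOpen_sphereGt r).mem_nhds (infty_mem_sphereGt r)

lemma exists_sphereGt_subset {N : Set 𝕊} (hN : N ∈ nhds (∞ : 𝕊)) :
    ∃ r : ℝ, 0 ≤ r ∧ sphereGt r ⊆ N := by
  obtain ⟨s, ⟨_, hsc⟩, hsub⟩ := OnePoint.hasBasis_nhds_infty.mem_iff.1 hN
  obtain ⟨r, hr⟩ := hsc.isBounded.subset_closedBall 0
  refine ⟨max r 0, le_max_right _ _, ?_⟩
  rintro x (⟨z, hz, rfl⟩ | h)
  · apply hsub
    left
    exact ⟨z, fun hzs => absurd (le_trans (by simpa using hr hzs) (le_max_left r 0))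
      (not_le.2 hz), rfl⟩
  · exact hsub (Or.inr h)

lemma infty_mem_closure_norm_gt (r : ℝ) :
    (∞ : 𝕊) ∈ closure ((OnePoint.some : ℂ → OnePoint ℂ) '' {z : ℂ | r < ‖z‖}) := by
  rw [mem_closure_iff_nhds]
  intro N hN
  obtain ⟨r', hr', hsub⟩ := exists_sphereGt_subset hN
  refine ⟨((max r r' + 1 : ℝ) : ℂ), hsub ?_, ?_⟩
  · left
    exact ⟨(max r r' + 1 : ℝ), by
      simp only [Set.mem_setOf_eq, Complex.norm_real, Real.norm_eq_abs]
      rw [abs_of_pos (by positivity)]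
      exact lt_of_le_of_lt (le_max_right r r') (lt_add_one _), rfl⟩
  · exact ⟨(max r r' + 1 : ℝ), by
      simp only [Set.mem_setOf_eq, Complex.norm_real, Real.norm_eq_abs]
      rw [abs_of_pos (by positivity)]
      exact lt_of_le_of_lt (le_max_left r r') (lt_add_one _), rfl⟩

lemma isPreconnected_sphereGt {r : ℝ} (hr : 0 ≤ r) : IsPreconnected (sphereGt r) := by
  have h1 : IsPreconnected ((OnePoint.some : ℂ → OnePoint ℂ) '' {z : ℂ | r < ‖z‖}) :=
    (isPreconnected_norm_gt hr).image _ OnePoint.continuous_coe.continuousOn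
  exact h1.subset_closure Set.subset_union_left
    (Set.union_subset subset_closure
      (by simpa using infty_mem_closure_norm_gt r))

instance : LocallyConnectedSpace 𝕊 := by
  rw [locallyConnectedSpace_iff_subsets_isOpen_isConnected]
  intro x U hU
  cases x with
  | infty =>
    obtain ⟨r, hr, hsub⟩ := exists_sphereGt_subset hU
    exact ⟨sphereGt r, hsub, isOpen_sphereGt r, infty_mem_sphereGt r,
      ⟨∞, infty_mem_sphereGt r⟩, isPreconnected_sphereGt hr⟩
  | coe z =>
    rw [OnePoint.nhds_coe_eq, Filter.mem_map] at hU
    obtain ⟨ε, hε, hball⟩ := Metric.mem_nhds_iff.1 hU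
    refine ⟨(OnePoint.some : ℂ → OnePoint ℂ) '' Metric.ball z ε, ?_, OnePoint.isOpenMap_coe _ Metric.isOpen_ball,
      ⟨z, Metric.mem_ball_self hε, rfl⟩, ⟨(z : 𝕊), ⟨z, Metric.mem_ball_self hε, rfl⟩⟩,
      (convex_ball z ε).isPreconnected.image _ OnePoint.continuous_coe.continuousOn⟩
    rintro x ⟨w, hw, rfl⟩
    exact hball hw

end Infra
section Infra2
open OnePoint Metric Polynomial

local notation "𝕊" => OnePoint ℂ

lemma polyMap_pow (p : Polynomial ℂ) (n : ℕ) :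
    ((polyMap p) ^ n : Function.End 𝕊) = OnePoint.map ((fun z : ℂ => p.eval z)^[n]) := by
  induction n with
  | zero => simp [Function.iterate_zero, OnePoint.map_id]; rfl
  | succ n ih =>
    rw [pow_succ, ih]
    have : (polyMap p ^ n * polyMap p : Function.End 𝕊)
        = (OnePoint.map ((fun z : ℂ => p.eval z)^[n]) ∘ polyMap p : 𝕊 → 𝕊) := by
      rw [← ih]; rfl
    rw [← ih] at this ⊢
    rw [this, ih]
    show OnePoint.map _ ∘ OnePoint.map _ = _
    rw [← OnePoint.map_comp, ← Function.iterate_succ]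

lemma polyMap_pow_coe (p : Polynomial ℂ) (n : ℕ) (z : ℂ) :
    ((polyMap p) ^ n : Function.End 𝕊) (z : 𝕊) = (((fun z : ℂ => p.eval z)^[n] z : ℂ) : 𝕊) := by
  rw [polyMap_pow]; exact OnePoint.map_some _ _

lemma polyMap_pow_infty (p : Polynomial ℂ) (n : ℕ) :
    ((polyMap p) ^ n : Function.End 𝕊) (∞ : 𝕊) = (∞ : 𝕊) := by
  rw [polyMap_pow]; exact OnePoint.map_infty _

lemma mem_semigroupGen_single {q h : Function.End 𝕊} (hh : h ∈ semigroupGen {q}) :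
    ∃ n : ℕ, h = q ^ (n + 1) := by
  have : h ∈ Subsemigroup.closure ({q} : Set (Function.End 𝕊)) := hh
  refine Subsemigroup.closure_induction ?_ ?_ this
  · intro x hx
    exact ⟨0, by rw [Set.mem_singleton_iff] at hx; rw [hx, pow_one]⟩
  · rintro x y _ _ ⟨a, rfl⟩ ⟨b, rfl⟩
    exact ⟨a + b + 1, by rw [← pow_add]; ring_nf⟩

/-- Growth estimate for polynomials of degree at least 2. -/
lemma poly_growth {p : Polynomial ℂ} (hp : 2 ≤ p.natDegree) :
    ∃ R : ℝ, 1 ≤ R ∧ ∀ z : ℂ, R ≤ ‖z‖ → 2 * ‖z‖ ≤ ‖p.eval z‖ := by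
  set d := p.natDegree with hd
  have hp0 : p ≠ 0 := fun h => by simp [h] at hd; omega
  set a := p.coeff d with ha
  have ha0 : a ≠ 0 := by
    rw [ha, hd]; exact Polynomial.leadingCoeff_ne_zero.2 hp0
  have ha0' : 0 < ‖a‖ := norm_pos_iff.2 ha0
  set S : ℝ := ∑ i ∈ Finset.range d, ‖p.coeff i‖ with hS
  have hS0 : 0 ≤ S := Finset.sum_nonneg fun _ _ => norm_nonneg _
  refine ⟨max 1 ((S + 2) / ‖a‖), le_max_left _ _, ?_⟩
  intro z hz
  have hz1 : 1 ≤ ‖z‖ := le_trans (le_max_left _ _) hz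
  have hz2 : (S + 2) / ‖a‖ ≤ ‖z‖ := le_trans (le_max_right _ _) hz
  have hza : S + 2 ≤ ‖a‖ * ‖z‖ := by
    rw [div_le_iff₀ ha0'] at hz2; linarith [hz2]
  -- decompose the evaluation
  have heval : p.eval z = a * z ^ d + ∑ i ∈ Finset.range d, p.coeff i * z ^ i := by
    rw [Polynomial.eval_eq_sum_range, Finset.sum_range_succ]; ring
  have htail : ‖∑ i ∈ Finset.range d, p.coeff i * z ^ i‖ ≤ S * ‖z‖ ^ (d - 1) := by
    calc ‖∑ i ∈ Finset.range d, p.coeff i * z ^ i‖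
        ≤ ∑ i ∈ Finset.range d, ‖p.coeff i * z ^ i‖ := norm_sum_le _ _
      _ ≤ ∑ i ∈ Finset.range d, ‖p.coeff i‖ * ‖z‖ ^ (d - 1) := by
          apply Finset.sum_le_sum
          intro i hi
          rw [norm_mul, norm_pow]
          exact mul_le_mul_of_nonneg_left
            (pow_le_pow_right₀ hz1 (by have := Finset.mem_range.1 hi; omega : i ≤ d - 1))
            (norm_nonneg _)
      _ = S * ‖z‖ ^ (d - 1) := by rw [← Finset.sum_mul]
  have hpow : ‖z‖ ^ d = ‖z‖ ^ (d - 1) * ‖z‖ := by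
    rw [← pow_succ]
    congr 1
    omega
  have hmain : ‖a * z ^ d‖ - ‖∑ i ∈ Finset.range d, p.coeff i * z ^ i‖ ≤ ‖p.eval z‖ := by
    rw [heval]
    have h := norm_sub_norm_le (a * z ^ d) (-(∑ i ∈ Finset.range d, p.coeff i * z ^ i))
    rw [norm_neg, sub_neg_eq_add] at h
    exact h
  have hnorm : ‖a * z ^ d‖ = ‖a‖ * (‖z‖ ^ (d - 1) * ‖z‖) := by
    rw [norm_mul, norm_pow, hpow]
  have hzd1 : ‖z‖ ≤ ‖z‖ ^ (d - 1) := by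
    calc ‖z‖ = ‖z‖ ^ 1 := (pow_one _).symm
    _ ≤ ‖z‖ ^ (d - 1) := pow_le_pow_right₀ hz1 (by omega)
  have key : 2 * ‖z‖ ≤ ‖a‖ * (‖z‖ ^ (d - 1) * ‖z‖) - S * ‖z‖ ^ (d - 1) := by
    have h1 : (S + 2) * ‖z‖ ^ (d - 1) ≤ (‖a‖ * ‖z‖) * ‖z‖ ^ (d - 1) :=
      mul_le_mul_of_nonneg_right hza (by positivity)
    nlinarith [hzd1, norm_nonneg z, hz1]
  linarith [hmain, htail, key, hnorm.le, hnorm.ge]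

/-- Iterated growth: once beyond `R`, the orbit grows at least geometrically. -/
lemma poly_iter_growth {p : Polynomial ℂ} {R : ℝ} (hR : 1 ≤ R)
    (h : ∀ z : ℂ, R ≤ ‖z‖ → 2 * ‖z‖ ≤ ‖p.eval z‖) :
    ∀ (n : ℕ) (z : ℂ), R ≤ ‖z‖ → 2 ^ n * ‖z‖ ≤ ‖(fun w : ℂ => p.eval w)^[n] z‖ := by
  intro n
  induction n with
  | zero => intro z _; simp
  | succ n ih =>
    intro z hz
    have h1 := ih z hz
    have h2 : R ≤ ‖(fun w : ℂ => p.eval w)^[n] z‖ := by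
      calc R ≤ ‖z‖ := hz
      _ = 1 * ‖z‖ := (one_mul _).symm
      _ ≤ 2 ^ n * ‖z‖ := by
          apply mul_le_mul_of_nonneg_right _ (norm_nonneg z)
          exact one_le_pow₀ (by norm_num)
      _ ≤ _ := h1
    rw [Function.iterate_succ_apply']
    calc (2:ℝ) ^ (n+1) * ‖z‖ = 2 * (2 ^ n * ‖z‖) := by ring
    _ ≤ 2 * ‖(fun w : ℂ => p.eval w)^[n] z‖ := by linarith [h1]
    _ ≤ _ := h _ h2

lemma poly_iter_ge {p : Polynomial ℂ} {R : ℝ} (hR : 1 ≤ R)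
    (h : ∀ z : ℂ, R ≤ ‖z‖ → 2 * ‖z‖ ≤ ‖p.eval z‖) (n : ℕ) (z : ℂ) (hz : R ≤ ‖z‖) :
    ‖z‖ ≤ ‖(fun w : ℂ => p.eval w)^[n] z‖ := by
  have := poly_iter_growth hR h n z hz
  have h2 : (1:ℝ) * ‖z‖ ≤ 2 ^ n * ‖z‖ :=
    mul_le_mul_of_nonneg_right (one_le_pow₀ (by norm_num)) (norm_nonneg z)
  linarith

end Infra2
section Dyn
open OnePoint Metric Polynomial Bornology

local notation "𝕊" => OnePoint ℂ

lemma poly_tendsto_cocompact {p : Polynomial ℂ} (hp : 0 < p.natDegree) :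
    Filter.Tendsto (fun z : ℂ => p.eval z) (Filter.cocompact ℂ) (Filter.cocompact ℂ) := by
  rw [← Metric.cobounded_eq_cocompact, ← tendsto_norm_atTop_iff_cobounded]
  exact p.tendsto_norm_atTop (natDegree_pos_iff_degree_pos.1 hp)
    (by rw [Metric.cobounded_eq_cocompact]; exact tendsto_norm_cocompact_atTop)

lemma polyMap_continuous {p : Polynomial ℂ} (hp : 0 < p.natDegree) :
    Continuous (polyMap p : 𝕊 → 𝕊) := by
  apply OnePoint.continuous_map p.continuous
  have h := poly_tendsto_cocompact hp
  rw [Filter.coclosedCompact_eq_cocompact]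
  exact h

lemma polyMap_pow_continuous {p : Polynomial ℂ} (hp : 0 < p.natDegree) (n : ℕ) :
    Continuous (((polyMap p) ^ n : Function.End 𝕊) : 𝕊 → 𝕊) := by
  induction n with
  | zero => rw [pow_zero]; exact continuous_id
  | succ n ih =>
    have : ((polyMap p) ^ (n+1) : Function.End 𝕊)
        = ((polyMap p ^ n : Function.End 𝕊) : 𝕊 → 𝕊) ∘ (polyMap p : 𝕊 → 𝕊) := by
      rw [pow_succ]; rfl
    rw [this]
    exact ih.comp (polyMap_continuous hp)

/-- Tail equicontinuity on escape regions. -/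
lemma tail_equicont {p : Polynomial ℂ} (hp : 2 ≤ p.natDegree) {R : ℝ} (hR1 : 1 ≤ R)
    (hR : ∀ z : ℂ, R ≤ ‖z‖ → 2 * ‖z‖ ≤ ‖p.eval z‖) (n : ℕ) :
    EquicontinuousOn
      (fun h : (semigroupGen {polyMap p} : Set (Function.End 𝕊)) => (h.1 : 𝕊 → 𝕊))
      ((OnePoint.some '' {z : ℂ | R < ‖(fun w : ℂ => p.eval w)^[n] z‖}) ∪ {∞}) := by
  set P : ℂ → ℂ := fun w => p.eval w with hP
  set Sn : Set ℂ := {z : ℂ | R < ‖P^[n] z‖} with hSn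
  set U : Set 𝕊 := (OnePoint.some '' Sn) ∪ {∞} with hU
  intro x hx
  intro V hV
  -- reduce to a statement over ℕ
  suffices hsuf : ∀ᶠ y in nhdsWithin x U, ∀ m : ℕ,
      (((polyMap p) ^ (m+1) : Function.End 𝕊) x, ((polyMap p) ^ (m+1) : Function.End 𝕊) y) ∈ V by
    refine hsuf.mono ?_
    rintro y hy ⟨h, hh⟩
    obtain ⟨m, rfl⟩ := mem_semigroupGen_single hh
    exact hy m
  -- entourage decomposition at (∞, ∞)
  have hVnhds : V ∈ nhds ((∞ : 𝕊), (∞ : 𝕊)) := mem_nhds_diag hV ∞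
  rw [nhds_prod_eq, Filter.mem_prod_iff] at hVnhds
  obtain ⟨W₁, hW₁, W₂, hW₂, hWsub⟩ := hVnhds
  obtain ⟨r, hr0, hrsub⟩ := exists_sphereGt_subset (Filter.inter_mem hW₁ hW₂)
  -- threshold
  set k : ℕ := ⌈r⌉₊ + 1 with hk
  set N : ℕ := n + k with hN
  have hrk : r < 2 ^ k * R := by
    have h1 : (k : ℝ) ≤ 2 ^ k := by
      exact_mod_cast (Nat.lt_two_pow_self (n := k)).le
    have h2 : r < (k : ℝ) := by
      calc r ≤ ⌈r⌉₊ := Nat.le_ceil r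
      _ < (k : ℝ) := by exact_mod_cast Nat.lt_succ_self _
    have h3 : (2:ℝ) ^ k ≤ 2 ^ k * R := le_mul_of_one_le_right (by positivity) hR1
    linarith
  -- key growth claim
  have claim : ∀ m : ℕ, N ≤ m → ∀ w : ℂ, w ∈ Sn → r < ‖P^[m+1] w‖ := by
    intro m hm w hw
    have hsplit : P^[m+1] w = P^[m+1-n] (P^[n] w) := by
      rw [← Function.iterate_add_apply]
      congr 1
      omega
    have hwn : R ≤ ‖P^[n] w‖ := le_of_lt hw
    have hgrow := poly_iter_growth hR1 hR (m+1-n) (P^[n] w) hwn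
    have h2k : (2:ℝ) ^ k ≤ 2 ^ (m+1-n) := by
      apply pow_le_pow_right₀ (by norm_num)
      omega
    have hRw : 2 ^ (m+1-n) * R ≤ 2 ^ (m+1-n) * ‖P^[n] w‖ :=
      mul_le_mul_of_nonneg_left hwn (by positivity)
    rw [hsplit]
    calc r < 2 ^ k * R := hrk
    _ ≤ 2 ^ (m+1-n) * R := mul_le_mul_of_nonneg_right h2k (by linarith)
    _ ≤ 2 ^ (m+1-n) * ‖P^[n] w‖ := hRw
    _ ≤ ‖P^[m+1-n] (P^[n] w)‖ := hgrow
  -- membership in sphereGt r for tail iterates, for any point of U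
  have memtail : ∀ y ∈ U, ∀ m : ℕ, N ≤ m →
      ((polyMap p) ^ (m+1) : Function.End 𝕊) y ∈ sphereGt r := by
    rintro y (⟨w, hw, rfl⟩ | hy) m hm
    · rw [polyMap_pow_coe]
      exact Or.inl ⟨_, claim m hm w hw, rfl⟩
    · rw [Set.mem_singleton_iff] at hy
      rw [hy, polyMap_pow_infty]
      exact infty_mem_sphereGt r
  -- head : finitely many continuous maps
  have head : ∀ᶠ y in nhdsWithin x U, ∀ m ∈ Set.Iio N,
      (((polyMap p) ^ (m+1) : Function.End 𝕊) x, ((polyMap p) ^ (m+1) : Function.End 𝕊) y) ∈ V := by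
    rw [(Set.finite_Iio N).eventually_all]
    intro m _
    have hc : ContinuousAt (((polyMap p) ^ (m+1) : Function.End 𝕊) : 𝕊 → 𝕊) x :=
      (polyMap_pow_continuous (by omega) (m+1)).continuousAt
    have hball : UniformSpace.ball (((polyMap p) ^ (m+1) : Function.End 𝕊) x) V
        ∈ nhds (((polyMap p) ^ (m+1) : Function.End 𝕊) x) :=
      UniformSpace.ball_mem_nhds _ hV
    exact (hc.eventually_mem hball).filter_mono nhdsWithin_le_nhds
  have hyU : ∀ᶠ y in nhdsWithin x U, y ∈ U := eventually_mem_nhdsWithin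
  filter_upwards [head, hyU] with y hhead hyU m
  by_cases hm : m < N
  · exact hhead m hm
  · have hm' : N ≤ m := le_of_not_gt hm
    have h1 := memtail x hx m hm'
    have h2 := memtail y hyU m hm'
    exact hWsub ⟨(hrsub h1).1, (hrsub h2).2⟩

end Dyn
section Dyn2
open OnePoint Metric Polynomial Bornology

local notation "𝕊" => OnePoint ℂ

lemma fatou_isOpen (H : Set (Function.End 𝕊)) : IsOpen (fatouSet H) := by
  rw [isOpen_iff_mem_nhds]
  rintro x ⟨U, hU, hE⟩
  rw [_root_.mem_nhds_iff]
  refine ⟨interior U, ?_, isOpen_interior, mem_interior_iff_mem_nhds.2 hU⟩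
  intro x' hx'
  exact ⟨interior U, isOpen_interior.mem_nhds hx', fun y hy => (hE y (interior_subset hy)).mono interior_subset⟩

/-- The escape region at time `n`. -/
def escSet (p : Polynomial ℂ) (R : ℝ) (n : ℕ) : Set ℂ :=
  {z : ℂ | R < ‖(fun w : ℂ => p.eval w)^[n] z‖}

variable {p : Polynomial ℂ} {R : ℝ}


lemma esc_isOpen (n : ℕ) : IsOpen (escSet p R n) := by
  have : Continuous fun z : ℂ => ‖(fun w : ℂ => p.eval w)^[n] z‖ :=
    (p.continuous.iterate n).norm
  exact isOpen_lt continuous_const this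

lemma esc_zero_sphereGt : ((OnePoint.some '' (escSet p R 0)) ∪ {∞} : Set 𝕊) = sphereGt R := by
  simp only [escSet, Function.iterate_zero, id_eq]
  rfl

lemma sphereGt_subset_fatou (hp : 2 ≤ p.natDegree) (hR1 : 1 ≤ R)
    (hR : ∀ z : ℂ, R ≤ ‖z‖ → 2 * ‖z‖ ≤ ‖p.eval z‖) :
    sphereGt R ⊆ fatouSet (semigroupGen {polyMap p}) := by
  intro x hx
  refine ⟨sphereGt R, (isOpen_sphereGt R).mem_nhds hx, ?_⟩
  rw [← esc_zero_sphereGt]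
  exact tail_equicont hp hR1 hR 0

lemma esc_subset_fatou (hp : 2 ≤ p.natDegree) (hR1 : 1 ≤ R)
    (hR : ∀ z : ℂ, R ≤ ‖z‖ → 2 * ‖z‖ ≤ ‖p.eval z‖) (n : ℕ) :
    (OnePoint.some '' (escSet p R n) : Set 𝕊) ⊆ fatouSet (semigroupGen {polyMap p}) := by
  intro x hx
  refine ⟨OnePoint.some '' (escSet p R n), (OnePoint.isOpenMap_coe _ (esc_isOpen n)).mem_nhds hx, ?_⟩
  exact (tail_equicont hp hR1 hR n).mono Set.subset_union_left

/-- Every connected component of an escape region is unbounded (maximum modulus). -/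
lemma esc_component_unbounded (hR1 : 1 ≤ R) (n : ℕ) {x : ℂ} (hx : x ∈ escSet p R n) :
    ¬ IsBounded (connectedComponentIn (escSet p R n) x) := by
  intro hbd
  set q : ℂ → ℂ := (fun w : ℂ => p.eval w)^[n] with hq
  set U' : Set ℂ := connectedComponentIn (escSet p R n) x with hU'
  have hopen : IsOpen U' := (esc_isOpen n).connectedComponentIn
  have hfr : ∀ y ∈ frontier U', ‖q y‖ ≤ R := by
    intro y hy
    have hyU : y ∉ U' := by
      rw [hopen.frontier_eq] at hy
      exact hy.2
    by_contra hlt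
    push_neg at hlt
    have hyE : y ∈ escSet p R n := hlt
    have hynb : connectedComponentIn (escSet p R n) y ∈ nhds y :=
      connectedComponentIn_mem_nhds ((esc_isOpen n).mem_nhds hyE)
    have hycl : y ∈ closure U' := by
      rw [hopen.frontier_eq] at hy
      exact hy.1
    rw [mem_closure_iff_nhds] at hycl
    obtain ⟨z', hz'1, hz'2⟩ := hycl _ hynb
    have e1 : connectedComponentIn (escSet p R n) x = connectedComponentIn (escSet p R n) z' :=
      connectedComponentIn_eq hz'2
    have e2 : connectedComponentIn (escSet p R n) y = connectedComponentIn (escSet p R n) z' :=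
      connectedComponentIn_eq hz'1
    apply hyU
    rw [hU', e1, ← e2]
    exact mem_connectedComponentIn hyE
  have hdiff : DiffContOnCl ℂ q U' := ((p.differentiable.iterate n).diffContOnCl)
  have := Complex.norm_le_of_forall_mem_frontier_norm_le hbd hdiff hfr
    (subset_closure (mem_connectedComponentIn hx))
  have hx' : R < ‖q x‖ := hx
  exact absurd hx' (not_lt.2 this)

lemma infty_mem_closure_unbounded {s : Set ℂ} (hs : ¬ IsBounded s) :
    (∞ : 𝕊) ∈ closure ((OnePoint.some : ℂ → 𝕊) '' s) := by
  rw [mem_closure_iff_nhds]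
  intro N hN
  obtain ⟨r, hr0, hsub⟩ := exists_sphereGt_subset hN
  rw [Metric.isBounded_iff_subset_closedBall 0] at hs
  push_neg at hs
  obtain ⟨z, hz, hznot⟩ := (Set.not_subset.1 (hs r))
  refine ⟨(z : 𝕊), hsub (Or.inl ⟨z, ?_, rfl⟩), ⟨z, hz, rfl⟩⟩
  simpa [Metric.mem_closedBall, not_le] using hznot

lemma esc_union_infty_preconnected (hR1 : 1 ≤ R) (n : ℕ) :
    IsPreconnected ((OnePoint.some '' (escSet p R n)) ∪ {∞} : Set 𝕊) := by
  set c : Set (Set 𝕊) :=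
    insert {∞} ((fun x : ℂ => (OnePoint.some '' connectedComponentIn (escSet p R n) x) ∪ {∞}) '' (escSet p R n))
    with hc
  have hU : ⋃₀ c = (OnePoint.some '' (escSet p R n)) ∪ {∞} := by
    apply Set.Subset.antisymm
    · rintro y hy
      obtain ⟨t, ht, hyt⟩ := hy
      rcases ht with rfl | ⟨x, hx, rfl⟩
      · exact Or.inr hyt
      · rcases hyt with ⟨w, hw, rfl⟩ | h
        · exact Or.inl ⟨w, connectedComponentIn_subset _ _ hw, rfl⟩
        · exact Or.inr h
    · rintro y (⟨w, hw, rfl⟩ | h)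
      · exact ⟨_, Or.inr ⟨w, hw, rfl⟩, Or.inl ⟨w, mem_connectedComponentIn hw, rfl⟩⟩
      · exact ⟨{∞}, Or.inl rfl, h⟩
  rw [← hU]
  apply isPreconnected_sUnion (∞ : 𝕊)
  · rintro t (rfl | ⟨x, hx, rfl⟩)
    · rfl
    · exact Or.inr rfl
  · rintro t (rfl | ⟨x, hx, rfl⟩)
    · exact isPreconnected_singleton
    · have h1 : IsPreconnected ((OnePoint.some : ℂ → 𝕊) '' connectedComponentIn (escSet p R n) x) :=
        (isPreconnected_connectedComponentIn).image _ OnePoint.continuous_coe.continuousOn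
      apply h1.subset_closure Set.subset_union_left
      apply Set.union_subset subset_closure
      intro y hy
      rw [Set.mem_singleton_iff] at hy
      rw [hy]
      exact infty_mem_closure_unbounded (esc_component_unbounded hR1 n hx)

lemma esc_subset_basin (hp : 2 ≤ p.natDegree) (hR1 : 1 ≤ R)
    (hR : ∀ z : ℂ, R ≤ ‖z‖ → 2 * ‖z‖ ≤ ‖p.eval z‖) (n : ℕ) :
    ((OnePoint.some '' (escSet p R n)) ∪ {∞} : Set 𝕊)
      ⊆ connectedComponentIn (fatouSet (semigroupGen {polyMap p})) ∞ := by
  apply IsPreconnected.subset_connectedComponentIn (esc_union_infty_preconnected hR1 n)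
    (Or.inr rfl)
  apply Set.union_subset (esc_subset_fatou hp hR1 hR n)
  intro y hy
  rw [Set.mem_singleton_iff] at hy
  rw [hy]
  exact sphereGt_subset_fatou hp hR1 hR (infty_mem_sphereGt R)

lemma infty_mem_basin (hp : 2 ≤ p.natDegree) (hR1 : 1 ≤ R)
    (hR : ∀ z : ℂ, R ≤ ‖z‖ → 2 * ‖z‖ ≤ ‖p.eval z‖) :
    (∞ : 𝕊) ∈ connectedComponentIn (fatouSet (semigroupGen {polyMap p})) ∞ :=
  mem_connectedComponentIn (sphereGt_subset_fatou hp hR1 hR (infty_mem_sphereGt R))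

end Dyn2
section Dyn3
open OnePoint Metric Polynomial Bornology

local notation "𝕊" => OnePoint ℂ

/-- Montel-type equicontinuity: a uniformly bounded family of iterates is
equicontinuous (via the Schwarz lemma). -/
lemma bounded_equicont {p : Polynomial ℂ} {M δ : ℝ} {c : ℂ} (hδ : 0 < δ) (hM : 0 < M)
    (hb : ∀ w ∈ Metric.ball c δ, ∀ m : ℕ, ‖(fun v : ℂ => p.eval v)^[m+1] w‖ ≤ M)
    (U : Set 𝕊) :
    EquicontinuousWithinAt
      (fun h : (semigroupGen {polyMap p} : Set (Function.End 𝕊)) => (h.1 : 𝕊 → 𝕊))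
      U (c : 𝕊) := by
  intro V hV
  set P : ℂ → ℂ := fun v => p.eval v with hP
  -- ε from uniform continuity of the embedding on a compact ball
  have uco : UniformContinuousOn (OnePoint.some : ℂ → 𝕊) (Metric.closedBall 0 M) :=
    (isCompact_closedBall (0:ℂ) M).uniformContinuousOn_of_continuous
      OnePoint.continuous_coe.continuousOn
  have hpre := uco hV
  rw [Filter.mem_map, Filter.mem_inf_principal] at hpre
  rw [Metric.mem_uniformity_dist] at hpre
  obtain ⟨ε, hε, hkey⟩ := hpre
  -- uniform Lipschitz bound from the Schwarz lemma
  set L : ℝ := (2 * M + 1) / δ with hL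
  have hL0 : 0 < L := by positivity
  have hlip : ∀ m : ℕ, ∀ z ∈ Metric.ball c δ, dist (P^[m+1] z) (P^[m+1] c) ≤ L * dist z c := by
    intro m z hz
    have hd : DifferentiableOn ℂ (P^[m+1]) (Metric.ball c δ) :=
      ((p.differentiable.iterate (m+1)).differentiableOn)
    have hmaps : Set.MapsTo (P^[m+1]) (Metric.ball c δ) (Metric.ball (P^[m+1] c) (2*M+1)) := by
      intro w hw
      rw [Metric.mem_ball]
      calc dist (P^[m+1] w) (P^[m+1] c) ≤ ‖P^[m+1] w‖ + ‖P^[m+1] c‖ := dist_le_norm_add_norm _ _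
      _ ≤ M + M := add_le_add (hb w hw m) (hb c (Metric.mem_ball_self hδ) m)
      _ < 2*M+1 := by linarith
    exact Complex.dist_le_div_mul_dist_of_mapsTo_ball hd (hmaps.mono_right Metric.ball_subset_closedBall) hz
  -- choice of the small radius
  set η : ℝ := min δ (ε / (2 * L)) with hη
  have hη0 : 0 < η := lt_min hδ (by positivity)
  have hLη : L * η < ε := by
    have : L * η ≤ L * (ε / (2 * L)) :=
      mul_le_mul_of_nonneg_left (min_le_right _ _) hL0.le
    have h2 : L * (ε / (2 * L)) = ε / 2 := by field_simp
    linarith [this, h2.le, hε]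
  have hN : (OnePoint.some '' Metric.ball c η : Set 𝕊) ∈ nhds (c : 𝕊) :=
    (OnePoint.isOpenMap_coe _ Metric.isOpen_ball).mem_nhds ⟨c, Metric.mem_ball_self hη0, rfl⟩
  have hev : ∀ᶠ y in nhdsWithin (c : 𝕊) U, y ∈ (OnePoint.some '' Metric.ball c η : Set 𝕊) :=
    Filter.eventually_of_mem (nhdsWithin_le_nhds hN) (fun y hy => hy)
  refine hev.mono ?_
  rintro y ⟨w, hw, rfl⟩ ⟨h, hh⟩
  obtain ⟨m, rfl⟩ := mem_semigroupGen_single hh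
  simp only [polyMap_pow_coe]
  have hwδ : w ∈ Metric.ball c δ := Metric.mem_ball.2 (lt_of_lt_of_le (Metric.mem_ball.1 hw)
    (min_le_left _ _))
  have hdist : dist (P^[m+1] c) (P^[m+1] w) < ε := by
    rw [dist_comm]
    calc dist (P^[m+1] w) (P^[m+1] c) ≤ L * dist w c := hlip m w hwδ
    _ ≤ L * η := mul_le_mul_of_nonneg_left (le_of_lt (Metric.mem_ball.1 hw)) hL0.le
    _ < ε := hLη
  have h1 : P^[m+1] c ∈ Metric.closedBall (0:ℂ) M := by
    rw [Metric.mem_closedBall, dist_zero_right]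
    exact hb c (Metric.mem_ball_self hδ) m
  have h2 : P^[m+1] w ∈ Metric.closedBall (0:ℂ) M := by
    rw [Metric.mem_closedBall, dist_zero_right]
    exact hb w hwδ m
  exact hkey hdist ⟨h1, h2⟩

/-- The set of normality of a polynomial of degree at least two is the complement of the
boundary of the basin of infinity. -/
theorem fatou_eq_compl_frontier_basin {p : Polynomial ℂ} (hp : 2 ≤ p.natDegree) :
    fatouSet (semigroupGen {polyMap p})
      = (frontier (connectedComponentIn (fatouSet (semigroupGen {polyMap p})) ∞))ᶜ := by
  obtain ⟨R, hR1, hR⟩ := poly_growth hp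
  set fat : Set 𝕊 := fatouSet (semigroupGen {polyMap p}) with hfat
  set A : Set 𝕊 := connectedComponentIn fat ∞ with hA
  have hfopen : IsOpen fat := fatou_isOpen _
  have hAopen : IsOpen A := hfopen.connectedComponentIn
  have hinfA : (∞ : 𝕊) ∈ A := infty_mem_basin hp hR1 hR
  apply Set.Subset.antisymm
  · intro z hz
    rw [Set.mem_compl_iff, hAopen.frontier_eq]
    rintro ⟨hzcl, hzA⟩
    have hznb : connectedComponentIn fat z ∈ nhds z :=
      connectedComponentIn_mem_nhds (hfopen.mem_nhds hz)
    rw [mem_closure_iff_nhds] at hzcl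
    obtain ⟨y, hy1, hy2⟩ := hzcl _ hznb
    apply hzA
    have e1 : connectedComponentIn fat ∞ = connectedComponentIn fat y :=
      connectedComponentIn_eq hy2
    have e2 : connectedComponentIn fat z = connectedComponentIn fat y :=
      connectedComponentIn_eq hy1
    rw [hA, e1, ← e2]
    exact mem_connectedComponentIn hz
  · intro z hz
    rw [Set.mem_compl_iff, hAopen.frontier_eq] at hz
    by_cases hzc : z ∈ closure A
    · have hzA : z ∈ A := by by_contra h; exact hz ⟨hzc, h⟩
      exact connectedComponentIn_subset _ _ hzA
    · have hbound : ∀ w : ℂ, (w : 𝕊) ∈ (closure A)ᶜ →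
          ∀ n : ℕ, ‖(fun v : ℂ => p.eval v)^[n] w‖ ≤ R := by
        intro w hw n
        by_contra h
        push_neg at h
        exact hw (subset_closure (esc_subset_basin hp hR1 hR n (Or.inl ⟨w, h, rfl⟩)))
      refine ⟨(closure A)ᶜ, (isClosed_closure).isOpen_compl.mem_nhds hzc, ?_⟩
      intro x hx
      have hxne : x ≠ ∞ := fun h => hx (h ▸ subset_closure hinfA)
      obtain ⟨cx, rfl⟩ : ∃ cx : ℂ, x = (cx : 𝕊) := by
        cases x with
        | infty => exact absurd rfl hxne
        | coe cx => exact ⟨cx, rfl⟩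
      have hopen : IsOpen ((OnePoint.some : ℂ → 𝕊) ⁻¹' (closure A)ᶜ) :=
        (isClosed_closure).isOpen_compl.preimage OnePoint.continuous_coe
      obtain ⟨δ, hδ, hball⟩ := Metric.isOpen_iff.1 hopen cx hx
      apply bounded_equicont hδ (lt_of_lt_of_le one_pos hR1)
      intro w hw m
      exact hbound w (hball hw) (m+1)

end Dyn3
section Green
open OnePoint Metric

local notation "𝕊" => OnePoint ℂ

/-- Green's function comparison: the unbounded Fatou component is contained in the unbounded
component of the intersection of the two basins. -/
lemma green_subset_component {F G : Set 𝕊} {Gf Gg : 𝕊 → ℝ}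
    (hFo : IsOpen F) (hGo : IsOpen G) (hFc : IsPreconnected F)
    (hinfF : (∞ : 𝕊) ∈ F) (hinfG : (∞ : 𝕊) ∈ G)
    (hGf : IsGreenOn F Gf) (hGg : IsGreenOn G Gg)
    (hagree : ∀ z ∈ connectedComponentIn (F ∩ G) ∞, z ≠ (∞ : 𝕊) → Gf z = Gg z) :
    F ⊆ connectedComponentIn (F ∩ G) ∞ := by
  set C : Set 𝕊 := connectedComponentIn (F ∩ G) ∞ with hC
  have hCopen : IsOpen C := (hFo.inter hGo).connectedComponentIn
  have hinfC : (∞ : 𝕊) ∈ C := mem_connectedComponentIn ⟨hinfF, hinfG⟩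
  have hCsub : C ⊆ F ∩ G := connectedComponentIn_subset _ _
  -- Key step: F ∩ closure C ⊆ C
  have key : F ∩ closure C ⊆ C := by
    rintro z ⟨hzF, hzcl⟩
    by_cases hzC : z ∈ C
    · exact hzC
    by_cases hzG : z ∈ G
    · -- z lies in the open set F ∩ G and in the closure of C, hence in C
      have hznb : connectedComponentIn (F ∩ G) z ∈ nhds z :=
        connectedComponentIn_mem_nhds ((hFo.inter hGo).mem_nhds ⟨hzF, hzG⟩)
      rw [mem_closure_iff_nhds] at hzcl
      obtain ⟨y, hy1, hy2⟩ := hzcl _ hznb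
      have e1 : connectedComponentIn (F ∩ G) ∞ = connectedComponentIn (F ∩ G) y :=
        connectedComponentIn_eq hy2
      have e2 : connectedComponentIn (F ∩ G) z = connectedComponentIn (F ∩ G) y :=
        connectedComponentIn_eq hy1
      rw [hC, e1, ← e2]
      exact mem_connectedComponentIn ⟨hzF, hzG⟩
    · -- z is a boundary point of G lying in F : contradiction with the Green's functions
      exfalso
      have hzne : z ≠ (∞ : 𝕊) := fun h => hzG (h ▸ hinfG)
      have hzfrG : z ∈ frontier G := by
        rw [hGo.frontier_eq]
        exact ⟨closure_mono (fun w hw => (hCsub hw).2) hzcl, hzG⟩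
      -- the approach filter
      set l : Filter 𝕊 := nhdsWithin z (C \ {∞}) with hl
      have hlne : l.NeBot := by
        rw [hl, ← mem_closure_iff_nhdsWithin_neBot]
        rw [mem_closure_iff_nhds] at hzcl ⊢
        intro N hN
        have hN' : N ∩ {(∞ : 𝕊)}ᶜ ∈ nhds z :=
          Filter.inter_mem hN (compl_singleton_mem_nhds hzne)
        obtain ⟨y, ⟨hyN, hyne⟩, hyC⟩ := hzcl _ hN'
        exact ⟨y, hyN, hyC, hyne⟩
      -- Gg tends to 0 along l
      have hGg0 : Filter.Tendsto Gg l (nhds 0) :=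
        (hGg.2.2 z hzfrG).mono_left
          (nhdsWithin_mono z (fun w hw => ⟨(hCsub hw.1).2, hw.2⟩))
      -- hence Gf tends to 0 along l
      have heq : Gf =ᶠ[l] Gg := by
        filter_upwards [self_mem_nhdsWithin] with y hy
        exact hagree y hy.1 (by simpa using hy.2)
      have hGf0 : Filter.Tendsto Gf l (nhds 0) := hGg0.congr' heq.symm
      -- but Gf is continuous at z with positive value
      have hGfc : Filter.Tendsto Gf l (nhds (Gf z)) :=
        (hGf.2.1 z ⟨hzF, by simpa using hzne⟩).mono_left
          (nhdsWithin_mono z (fun w hw => ⟨(hCsub hw.1).1, hw.2⟩))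
      have : Gf z = 0 := tendsto_nhds_unique hGfc hGf0
      have hpos : 0 < Gf z := hGf.1 z hzF (by simpa using hzne)
      linarith
  -- now use connectedness of F
  apply IsPreconnected.subset_left_of_subset_union hCopen
    (hFo.inter (isClosed_closure (s := C)).isOpen_compl) ?_ ?_ ⟨∞, hinfF, hinfC⟩ hFc
  · exact Set.disjoint_left.2 fun w hwC ⟨_, hwcl⟩ => hwcl (subset_closure hwC)
  · intro w hwF
    by_cases hwcl : w ∈ closure C
    · exact Or.inl (key ⟨hwF, hwcl⟩)
    · exact Or.inr ⟨hwF, hwcl⟩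

end Green
/-- If the Green's functions of the basins of `∞` of two polynomials of degree at least
two agree on the unbounded component of the intersection of the two basins, then the
Julia sets coincide. -/
theorem stmt16 (f g : Polynomial ℂ) (hf : 2 ≤ f.natDegree) (hg : 2 ≤ g.natDegree)
    (Gf Gg : OnePoint ℂ → ℝ)
    (hGf : IsGreenOn
      (connectedComponentIn (fatouSet (semigroupGen {polyMap f})) OnePoint.infty) Gf)
    (hGg : IsGreenOn
      (connectedComponentIn (fatouSet (semigroupGen {polyMap g})) OnePoint.infty) Gg)
    (hagree : ∀ z ∈ connectedComponentIn
        (connectedComponentIn (fatouSet (semigroupGen {polyMap f})) OnePoint.infty ∩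
          connectedComponentIn (fatouSet (semigroupGen {polyMap g})) OnePoint.infty)
        OnePoint.infty,
      z ≠ OnePoint.infty → Gf z = Gg z) :
    juliaSet (polyMap f) = juliaSet (polyMap g) := by
  obtain ⟨Rf, hRf1, hRf⟩ := poly_growth hf
  obtain ⟨Rg, hRg1, hRg⟩ := poly_growth hg
  set F : Set (OnePoint ℂ) :=
    connectedComponentIn (fatouSet (semigroupGen {polyMap f})) OnePoint.infty with hF
  set G : Set (OnePoint ℂ) :=
    connectedComponentIn (fatouSet (semigroupGen {polyMap g})) OnePoint.infty with hG
  have hFo : IsOpen F := (fatou_isOpen _).connectedComponentIn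
  have hGo : IsOpen G := (fatou_isOpen _).connectedComponentIn
  have hFc : IsPreconnected F := isPreconnected_connectedComponentIn
  have hGc : IsPreconnected G := isPreconnected_connectedComponentIn
  have hinfF : OnePoint.infty ∈ F := infty_mem_basin hf hRf1 hRf
  have hinfG : OnePoint.infty ∈ G := infty_mem_basin hg hRg1 hRg
  -- both basins are contained in (hence equal to) the unbounded component of their intersection
  have h1 : F ⊆ connectedComponentIn (F ∩ G) OnePoint.infty :=
    green_subset_component hFo hGo hFc hinfF hinfG hGf hGg hagree
  have hcomm : G ∩ F = F ∩ G := Set.inter_comm G F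
  have h2 : G ⊆ connectedComponentIn (G ∩ F) OnePoint.infty := by
    apply green_subset_component hGo hFo hGc hinfG hinfF hGg hGf
    intro z hz hzne
    rw [hcomm] at hz
    exact (hagree z hz hzne).symm
  have hFG : F = G := by
    apply Set.Subset.antisymm
    · exact fun z hz => (connectedComponentIn_subset _ _ (h1 hz)).2
    · exact fun z hz => (connectedComponentIn_subset _ _ (h2 hz)).2
  show (fatouSet (semigroupGen {polyMap f}))ᶜ = (fatouSet (semigroupGen {polyMap g}))ᶜ
  rw [fatou_eq_compl_frontier_basin hf, fatou_eq_compl_frontier_basin hg]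
  rw [← hF, ← hG, hFG]

end
end
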